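/- arXiv:2203.17107 — 4 statements merged into one kernel-verified Lean document; each statement's English description precedes it below -/
import Mathlib

section
/- Let G ⊆ F be a sub-σ-algebra and let (h^ν)_{ν≥1} be a nondecreasing sequence of L-bounded normal integrands on ℝⁿ, and set h := sup_ν h^ν. If for each ν there exists a G-conditional expectation ĥ^ν of h^ν, then sup_ν ĥ^ν is a G-conditional expectation of h. -/
open MeasureTheory ENNReal
open scoped RealInnerProductSpace

noncomputable section

namespace PaperDP

variable {Ω : Type*}

/-- The positive part of an extended real number, as an element of `ℝ≥0∞`. -/
def ePos (x : EReal) : ℝ≥0∞ := if x = ⊤ then ⊤ else ENNReal.ofReal x.toReal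

/-- The extended integral of an extended-real-valued function: it is `+∞` unless the
positive part of the integrand is integrable, in which case it is the difference of the
integrals of the positive and negative parts. -/
def EInt {mΩ : MeasurableSpace Ω} (μ : Measure Ω) (ξ : Ω → EReal) : EReal :=
  if (∫⁻ ω, ePos (ξ ω) ∂μ) = ⊤ then ⊤
  else ((∫⁻ ω, ePos (ξ ω) ∂μ : ℝ≥0∞) : EReal) - ((∫⁻ ω, ePos (-(ξ ω)) ∂μ : ℝ≥0∞) : EReal)

/-- An extended-real-valued random variable is quasi-integrable if its positive part or
its negative part is integrable. -/
def QuasiIntegrable {mΩ : MeasurableSpace Ω} (μ : Measure Ω) (ξ : Ω → EReal) : Prop :=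
  (∫⁻ ω, ePos (ξ ω) ∂μ) ≠ ⊤ ∨ (∫⁻ ω, ePos (-(ξ ω)) ∂μ) ≠ ⊤

/-- `ξ'` is a version of the `G`-conditional expectation of the extended-real random
variable `ξ`: it is `G`-measurable and satisfies `E[α ξ'] = E[α ξ]` for every bounded
nonnegative `G`-measurable real `α`. -/
def IsCondExpER {mΩ : MeasurableSpace Ω} (μ : Measure Ω) (G : MeasurableSpace Ω)
    (ξ ξ' : Ω → EReal) : Prop :=
  Measurable[G] ξ' ∧
  ∀ α : Ω → ℝ, Measurable[G] α → (∀ ω, 0 ≤ α ω) → (∃ C, ∀ ω, α ω ≤ C) →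
    EInt μ (fun ω => (α ω : EReal) * ξ' ω) = EInt μ (fun ω => (α ω : EReal) * ξ ω)

/-- A normal integrand with respect to the σ-algebra `m` on `Ω`: a jointly measurable
function (with respect to `B(E) ⊗ m`) with values in `ℝ ∪ {+∞}` which is lower
semicontinuous in its first argument. -/
def IsNormalIntegrand {E : Type*} [TopologicalSpace E] [MeasurableSpace E]
    (m : MeasurableSpace Ω) (h : E → Ω → EReal) : Prop :=
  Measurable[MeasurableSpace.prod inferInstance m] (fun p : E × Ω => h p.1 p.2) ∧
  (∀ ω, LowerSemicontinuous fun x => h x ω) ∧ ∀ x ω, h x ω ≠ ⊥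

/-- `h` is L-bounded: `h(x,ω) ≥ -ρ(ω)‖x‖ - m(ω)` for integrable nonnegative `ρ, m`. -/
def LBounded {E : Type*} [NormedAddCommGroup E] {mΩ : MeasurableSpace Ω} (μ : Measure Ω)
    (h : E → Ω → EReal) : Prop :=
  ∃ ρ m : Ω → ℝ, Integrable ρ μ ∧ Integrable m μ ∧ (∀ ω, 0 ≤ ρ ω) ∧ (∀ ω, 0 ≤ m ω) ∧
    ∀ᵐ ω ∂μ, ∀ x : E, (↑(-(ρ ω * ‖x‖ + m ω)) : EReal) ≤ h x ω

/-- `hG` is a `G`-conditional expectation of the normal integrand `h`: it is a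
`B(E) ⊗ G`-measurable normal integrand such that `hG(x(·),·)` is a version of the
`G`-conditional expectation of `h(x(·),·)` for every `G`-measurable `x` for which
`h(x(·),·)` is quasi-integrable. -/
def IsCondNI {E : Type*} [TopologicalSpace E] [MeasurableSpace E] {mΩ : MeasurableSpace Ω}
    (μ : Measure Ω) (G : MeasurableSpace Ω) (h hG : E → Ω → EReal) : Prop :=
  IsNormalIntegrand G hG ∧
  ∀ x : Ω → E, Measurable[G] x → QuasiIntegrable μ (fun ω => h (x ω) ω) →
    IsCondExpER μ G (fun ω => h (x ω) ω) (fun ω => hG (x ω) ω)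

/-- The recession function of `g`: `g^∞(y) = sup_{r>0} (g(z + r y) - g(z))/r`, where `z`
is any point with `g(z) < ∞` (for a proper lsc convex function the value does not depend
on the choice of `z`; we take the infimum over all such `z`). -/
def recessionFn {E : Type*} [AddCommGroup E] [Module ℝ E] (g : E → EReal) (y : E) : EReal :=
  ⨅ z : {z : E // g z < ⊤}, ⨆ r : {r : ℝ // 0 < r},
    ((r.1⁻¹ : ℝ) : EReal) * (g (z.1 + r.1 • y) - g z.1)

/-- Convexity of an extended-real-valued function. -/
def ConvexEFn {E : Type*} [AddCommGroup E] [Module ℝ E] (g : E → EReal) : Prop :=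
  ∀ x y : E, ∀ a b : ℝ, 0 ≤ a → 0 ≤ b → a + b = 1 →
    g (a • x + b • y) ≤ (a : EReal) * g x + (b : EReal) * g y

/-- A convex integrand: `h(·,ω)` is convex for every `ω`. -/
def ConvexIntegrand {E : Type*} [AddCommGroup E] [Module ℝ E]
    (h : E → Ω → EReal) : Prop :=
  ∀ ω, ConvexEFn (fun x => h x ω)


open scoped NNReal

lemma ePos_top : ePos ⊤ = ⊤ := if_pos rfl
lemma ePos_bot : ePos ⊥ = 0 := by simp [ePos]
lemma ePos_coe (r : ℝ) : ePos (r : EReal) = ENNReal.ofReal r := by simp [ePos]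
lemma ePos_zero : ePos 0 = 0 := by simpa using ePos_coe 0
lemma ePos_nonpos {x : EReal} (h : x ≤ 0) : ePos x = 0 := by
  induction x with
  | bot => exact ePos_bot
  | coe r => rw [ePos_coe]; exact ENNReal.ofReal_eq_zero.2 (by exact_mod_cast h)
  | top => simp at h

lemma monotone_ePos : Monotone ePos := by
  intro x y hxy
  induction y with
  | bot => simp [le_bot_iff.1 hxy]
  | coe s =>
    induction x with
    | bot => simp [ePos_bot]
    | coe r => simp only [ePos_coe]; exact ENNReal.ofReal_le_ofReal (by exact_mod_cast hxy)
    | top => simp at hxy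
  | top => simp [ePos_top]

lemma ofReal_le_ePos {r : ℝ} {x : EReal} (h : (r : EReal) ≤ x) : ENNReal.ofReal r ≤ ePos x := by
  simpa [ePos_coe] using monotone_ePos h

lemma continuous_ePos : Continuous ePos := by
  rw [continuous_iff_continuousAt]
  intro x
  induction x with
  | bot =>
    have hev : ePos =ᶠ[nhds (⊥ : EReal)] fun _ => (0 : ℝ≥0∞) := by
      filter_upwards [IsOpen.mem_nhds isOpen_Iio (by simp : (⊥:EReal) ∈ Set.Iio 0)] with y hy
      exact ePos_nonpos (le_of_lt hy)
    exact (continuousAt_const (y := (0:ℝ≥0∞))).congr hev.symm |>.congr (by simp [ePos_bot])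
  | coe r =>
    have hev : ePos =ᶠ[nhds ((r:ℝ) : EReal)] fun y => ENNReal.ofReal y.toReal := by
      filter_upwards [IsOpen.mem_nhds isOpen_Iio (by simp : ((r:ℝ):EReal) ∈ Set.Iio ⊤)] with y hy
      exact if_neg (ne_of_lt hy)
    refine ContinuousAt.congr ?_ hev.symm
    exact ENNReal.continuous_ofReal.continuousAt.comp
      (EReal.tendsto_toReal (by simp) (by simp))
  | top =>
    have key : Filter.Tendsto ePos (nhds (⊤ : EReal)) (nhds ⊤) := by
      rw [ENNReal.tendsto_nhds_top_iff_nnreal]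
      intro M
      have hmem : (⊤ : EReal) ∈ Set.Ioi ((((M : ℝ) + 1 : ℝ)) : EReal) := EReal.coe_lt_top _
      filter_upwards [IsOpen.mem_nhds isOpen_Ioi hmem] with y hy
      have h1 : ENNReal.ofReal ((M : ℝ) + 1) ≤ ePos y := ofReal_le_ePos hy.le
      refine lt_of_lt_of_le ?_ h1
      rw [ENNReal.ofReal_add M.coe_nonneg zero_le_one]
      simp only [ENNReal.ofReal_coe_nnreal, ENNReal.ofReal_one]
      exact ENNReal.lt_add_right ENNReal.coe_ne_top one_ne_zero
    unfold ContinuousAt; rw [ePos_top]; exact key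

lemma measurable_ePos : Measurable ePos := continuous_ePos.measurable

lemma ePos_iSup (f : ℕ → EReal) : ePos (⨆ i, f i) = ⨆ i, ePos (f i) :=
  Monotone.map_iSup_of_continuousAt continuous_ePos.continuousAt monotone_ePos ePos_bot

lemma ePos_iInf (f : ℕ → EReal) : ePos (⨅ i, f i) = ⨅ i, ePos (f i) :=
  Monotone.map_iInf_of_continuousAt continuous_ePos.continuousAt monotone_ePos ePos_top

lemma ePos_mul_coe {c : ℝ} (hc : 0 ≤ c) (x : EReal) :
    ePos ((c : EReal) * x) = ENNReal.ofReal c * ePos x := by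
  rcases eq_or_lt_of_le hc with hc0 | hc0
  · simp [← hc0, ePos_zero]
  induction x with
  | bot =>
    rw [EReal.coe_mul_bot_of_pos (by exact_mod_cast hc0)]; simp [ePos_bot]
  | coe r => rw [← EReal.coe_mul, ePos_coe, ePos_coe, ENNReal.ofReal_mul hc]
  | top =>
    rw [EReal.coe_mul_top_of_pos (by exact_mod_cast hc0)]
    simp [ePos_top, ENNReal.mul_top (by simpa using hc0 : ENNReal.ofReal c ≠ 0)]



lemma enn_sub_eq_top_iff {a b : ℝ≥0∞} (hb : b ≠ ⊤) : (a : EReal) - b = ⊤ ↔ a = ⊤ := by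
  lift b to ℝ≥0 using hb
  rw [EReal.coe_nnreal_eq_coe_real]
  by_cases ha : a = ⊤
  · subst ha; simp [EReal.top_sub_coe]
  · lift a to ℝ≥0 using ha
    rw [EReal.coe_nnreal_eq_coe_real, ← EReal.coe_sub]
    exact iff_of_false (EReal.coe_ne_top _) ENNReal.coe_ne_top

lemma enn_sub_eq_bot_iff {a b : ℝ≥0∞} (ha : a ≠ ⊤) : (a : EReal) - b = ⊥ ↔ b = ⊤ := by
  lift a to ℝ≥0 using ha
  rw [EReal.coe_nnreal_eq_coe_real]
  by_cases hb : b = ⊤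
  · subst hb; simp [EReal.sub_top]
  · lift b to ℝ≥0 using hb
    rw [EReal.coe_nnreal_eq_coe_real, ← EReal.coe_sub]
    exact iff_of_false (EReal.coe_ne_bot _) ENNReal.coe_ne_top

lemma enn_coe_sub_eq_iff {a b c d : ℝ≥0∞}
    (hside : (b ≠ ⊤ ∧ d ≠ ⊤) ∨ (a ≠ ⊤ ∧ c ≠ ⊤)) :
    ((a : EReal) - (b : EReal) = (c : EReal) - (d : EReal)) ↔ a + d = c + b := by
  have core : ∀ a b c d : ℝ≥0∞, a ≠ ⊤ → b ≠ ⊤ → c ≠ ⊤ → d ≠ ⊤ →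
      (((a : EReal) - b = (c : EReal) - d) ↔ a + d = c + b) := by
    intro a b c d ha hb hc hd
    lift a to ℝ≥0 using ha; lift b to ℝ≥0 using hb; lift c to ℝ≥0 using hc
    lift d to ℝ≥0 using hd
    simp only [EReal.coe_nnreal_eq_coe_real, ← EReal.coe_sub, EReal.coe_eq_coe_iff,
      ← ENNReal.coe_add, ENNReal.coe_inj]
    constructor
    · intro h
      have h2 : (a : ℝ) + (d : ℝ) = (c : ℝ) + (b : ℝ) := by linarith
      exact_mod_cast h2
    · intro h
      have h2 : (a : ℝ) + (d : ℝ) = (c : ℝ) + (b : ℝ) := by exact_mod_cast h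
      linarith
  rcases hside with ⟨hb, hd⟩ | ⟨ha, hc⟩
  · by_cases ha : a = ⊤
    · subst ha
      simp only [EReal.coe_ennreal_top, top_add]
      rw [show (⊤ : EReal) - b = ⊤ from by
        lift b to ℝ≥0 using hb; rw [EReal.coe_nnreal_eq_coe_real]; exact EReal.top_sub_coe _]
      rw [eq_comm, enn_sub_eq_top_iff hd, eq_comm (a := (⊤:ℝ≥0∞))]
      rw [ENNReal.add_eq_top]
      simp [hb]
    · by_cases hc : c = ⊤
      · subst hc
        simp only [EReal.coe_ennreal_top, top_add]
        rw [show (⊤ : EReal) - d = ⊤ from by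
          lift d to ℝ≥0 using hd; rw [EReal.coe_nnreal_eq_coe_real]; exact EReal.top_sub_coe _]
        rw [enn_sub_eq_top_iff hb, ENNReal.add_eq_top, eq_comm]
        simp [ha, hd]
      · exact core a b c d ha hb hc hd
  · by_cases hb : b = ⊤
    · subst hb
      simp only [EReal.coe_ennreal_top, EReal.sub_top, add_top]
      rw [eq_comm, enn_sub_eq_bot_iff hc, ENNReal.add_eq_top]
      simp [ha]
    · by_cases hd : d = ⊤
      · subst hd
        simp only [EReal.coe_ennreal_top, EReal.sub_top, add_top]
        rw [enn_sub_eq_bot_iff ha, eq_comm (a := (⊤:ℝ≥0∞)) (b := c + b), ENNReal.add_eq_top]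
        simp [hc, hb]
      · exact core a b c d ha hb hc hd



open scoped NNReal

section EIntLemmas
variable {mΩ : MeasurableSpace Ω} {μ : Measure Ω}

lemma ennreal_coe_eq_real {x : ℝ≥0∞} (hx : x ≠ ⊤) :
    (x : EReal) = ((x.toReal : ℝ) : EReal) := by
  lift x to ℝ≥0 using hx
  rw [EReal.coe_nnreal_eq_coe_real, ENNReal.coe_toReal]

lemma EInt_congr {f g : Ω → EReal} (h : f =ᵐ[μ] g) : EInt μ f = EInt μ g := by
  have h1 : ∫⁻ ω, ePos (f ω) ∂μ = ∫⁻ ω, ePos (g ω) ∂μ :=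
    lintegral_congr_ae (h.mono fun ω hω => by dsimp only; rw [hω])
  have h2 : ∫⁻ ω, ePos (-f ω) ∂μ = ∫⁻ ω, ePos (-g ω) ∂μ :=
    lintegral_congr_ae (h.mono fun ω hω => by dsimp only; rw [hω])
  simp only [EInt, h1, h2]

lemma EInt_eq_top_iff {f : Ω → EReal} :
    EInt μ f = ⊤ ↔ ∫⁻ ω, ePos (f ω) ∂μ = ⊤ := by
  by_cases hP : ∫⁻ ω, ePos (f ω) ∂μ = ⊤
  · simp [EInt, hP]
  · rw [EInt, if_neg hP]
    by_cases hN : ∫⁻ ω, ePos (-f ω) ∂μ = ⊤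
    · simp only [hN, EReal.coe_ennreal_top, EReal.sub_top]
      exact iff_of_false (by simp) hP
    · rw [enn_sub_eq_top_iff hN]

lemma EInt_eq_bot_imp {f : Ω → EReal} (h : EInt μ f = ⊥) :
    ∫⁻ ω, ePos (-f ω) ∂μ = ⊤ := by
  by_cases hP : ∫⁻ ω, ePos (f ω) ∂μ = ⊤
  · rw [EInt, if_pos hP] at h; exact absurd h (by simp)
  · rw [EInt, if_neg hP] at h
    exact (enn_sub_eq_bot_iff hP).1 h

lemma neg_lintegral_le_EInt {f : Ω → EReal} :
    -((∫⁻ ω, ePos (-f ω) ∂μ : ℝ≥0∞) : EReal) ≤ EInt μ f := by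
  by_cases hP : ∫⁻ ω, ePos (f ω) ∂μ = ⊤
  · rw [EInt, if_pos hP]; exact le_top
  · rw [EInt, if_neg hP, ← zero_sub]
    exact EReal.sub_le_sub (by exact_mod_cast zero_le) le_rfl

lemma EInt_le_lintegral {f : Ω → EReal} :
    EInt μ f ≤ ((∫⁻ ω, ePos (f ω) ∂μ : ℝ≥0∞) : EReal) := by
  by_cases hP : ∫⁻ ω, ePos (f ω) ∂μ = ⊤
  · rw [EInt, if_pos hP, hP]; simp
  · rw [EInt, if_neg hP]
    calc ((∫⁻ ω, ePos (f ω) ∂μ : ℝ≥0∞) : EReal) - ((∫⁻ ω, ePos (-f ω) ∂μ : ℝ≥0∞) : EReal)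
        ≤ ((∫⁻ ω, ePos (f ω) ∂μ : ℝ≥0∞) : EReal) - ((0:ℝ≥0∞) : EReal) :=
          EReal.sub_le_sub le_rfl (by exact_mod_cast zero_le)
      _ = ((∫⁻ ω, ePos (f ω) ∂μ : ℝ≥0∞) : EReal) := by
          rw [EReal.coe_ennreal_zero]; exact sub_zero _

lemma EInt_mono {f g : Ω → EReal} (hfg : ∀ᵐ ω ∂μ, f ω ≤ g ω) : EInt μ f ≤ EInt μ g := by
  have hP : ∫⁻ ω, ePos (f ω) ∂μ ≤ ∫⁻ ω, ePos (g ω) ∂μ :=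
    lintegral_mono_ae (hfg.mono fun ω h => monotone_ePos h)
  have hN : ∫⁻ ω, ePos (-g ω) ∂μ ≤ ∫⁻ ω, ePos (-f ω) ∂μ :=
    lintegral_mono_ae (hfg.mono fun ω h => monotone_ePos (EReal.neg_le_neg_iff.2 h))
  by_cases hPg : ∫⁻ ω, ePos (g ω) ∂μ = ⊤
  · rw [show EInt μ g = ⊤ from EInt_eq_top_iff.2 hPg]; exact le_top
  · have hPf : ∫⁻ ω, ePos (f ω) ∂μ ≠ ⊤ := fun h => hPg (top_le_iff.1 (h ▸ hP))
    rw [EInt, if_neg hPf, EInt, if_neg hPg]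
    exact EReal.sub_le_sub (by exact_mod_cast hP) (by exact_mod_cast hN)

lemma EInt_of_nonpos {f : Ω → EReal} (hf : ∀ᵐ ω ∂μ, f ω ≤ 0) :
    EInt μ f = -((∫⁻ ω, ePos (-f ω) ∂μ : ℝ≥0∞) : EReal) := by
  have hP : ∫⁻ ω, ePos (f ω) ∂μ = 0 := by
    calc ∫⁻ ω, ePos (f ω) ∂μ = ∫⁻ _, (0:ℝ≥0∞) ∂μ :=
          lintegral_congr_ae (hf.mono fun ω h => by dsimp only; rw [ePos_nonpos h])
      _ = 0 := lintegral_zero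
  rw [EInt, if_neg (by simp [hP]), hP]
  rw [EReal.coe_ennreal_zero, zero_sub]

end EIntLemmas

section MoreLemmas
variable {mΩ : MeasurableSpace Ω} {μ : Measure Ω}

lemma ereal_neg_iSup (f : ℕ → EReal) : -(⨆ i, f i) = ⨅ i, -(f i) := by
  apply le_antisymm
  · exact le_iInf fun i => EReal.neg_le_neg_iff.2 (le_iSup f i)
  · have h1 : ∀ i, f i ≤ -(⨅ j, -(f j)) := fun i =>
      EReal.le_neg_of_le_neg (iInf_le (fun j => -(f j)) i)
    exact EReal.le_neg_of_le_neg (iSup_le h1)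

lemma coe_mul_iSup {c : ℝ} (hc : 0 ≤ c) (f : ℕ → EReal) :
    (c : EReal) * (⨆ i, f i) = ⨆ i, (c : EReal) * f i := by
  rcases eq_or_lt_of_le hc with hc0 | hc0
  · simp [← hc0]
  apply le_antisymm
  · have hcne : ((c : EReal)) ≠ ⊤ := by simp
    rw [mul_comm, ← EReal.le_div_iff_mul_le (by exact_mod_cast hc0) hcne]
    refine iSup_le fun i => ?_
    rw [EReal.le_div_iff_mul_le (by exact_mod_cast hc0) hcne, mul_comm]
    exact le_iSup (fun i => (c : EReal) * f i) i
  · exact iSup_le fun i => mul_le_mul_of_nonneg_left (le_iSup f i) (by exact_mod_cast hc)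

lemma indicator_coe_mul (B : Set Ω) (α : Ω → ℝ) (η : Ω → EReal) (ω : Ω) :
    ((B.indicator α ω : ℝ) : EReal) * η ω
      = B.indicator (fun ω' => (α ω' : EReal) * η ω') ω := by
  by_cases h : ω ∈ B
  · rw [Set.indicator_of_mem h, Set.indicator_of_mem h]
  · rw [Set.indicator_of_notMem h, Set.indicator_of_notMem h]
    simp

lemma ePos_indicator (B : Set Ω) (g : Ω → EReal) (ω : Ω) :
    ePos (B.indicator g ω) = B.indicator (fun ω' => ePos (g ω')) ω := by
  by_cases h : ω ∈ B <;> simp [h, ePos_zero]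

lemma neg_indicator' (B : Set Ω) (g : Ω → EReal) (ω : Ω) :
    -(B.indicator g ω) = B.indicator (fun ω' => -(g ω')) ω := by
  by_cases h : ω ∈ B <;> simp [h]

lemma lintegral_eq_tsum_partition {B : ℕ → Set Ω} (hmeas : ∀ k, MeasurableSet (B k))
    (hdisj : Pairwise (Function.onFun Disjoint B)) (hcover : (⋃ k, B k) = Set.univ)
    (g : Ω → ℝ≥0∞) :
    ∫⁻ ω, g ω ∂μ = ∑' k, ∫⁻ ω, (B k).indicator g ω ∂μ := by
  have h1 := lintegral_iUnion (μ := μ) hmeas hdisj g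
  rw [hcover, setLIntegral_univ] at h1
  rw [h1]
  exact tsum_congr fun k => (lintegral_indicator (hmeas k) g).symm

lemma EInt_indicator_const [IsFiniteMeasure μ] {A : Set Ω} (hA : MeasurableSet A) (c : ℝ) :
    EInt μ (fun ω => A.indicator (fun _ => ((c : ℝ) : EReal)) ω)
      = ((c * (μ A).toReal : ℝ) : EReal) := by
  have hμ : μ A ≠ ⊤ := measure_ne_top μ A
  have hplus : ∀ ω : Ω, ePos (A.indicator (fun _ => ((c : ℝ) : EReal)) ω)
      = A.indicator (fun _ => ENNReal.ofReal c) ω := by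
    intro ω; by_cases h : ω ∈ A <;> simp [h, ePos_coe, ePos_zero]
  have hminus : ∀ ω : Ω, ePos (-(A.indicator (fun _ => ((c : ℝ) : EReal)) ω))
      = A.indicator (fun _ => ENNReal.ofReal (-c)) ω := by
    intro ω; by_cases h : ω ∈ A
    · rw [Set.indicator_of_mem h, Set.indicator_of_mem h, ← EReal.coe_neg, ePos_coe]
    · rw [Set.indicator_of_notMem h, Set.indicator_of_notMem h, neg_zero, ePos_zero]
  have hP : ∫⁻ ω, ePos (A.indicator (fun _ => ((c : ℝ) : EReal)) ω) ∂μ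
      = ENNReal.ofReal c * μ A := by
    simp only [hplus]; rw [lintegral_indicator_const hA]
  have hN : ∫⁻ ω, ePos (-(A.indicator (fun _ => ((c : ℝ) : EReal)) ω)) ∂μ
      = ENNReal.ofReal (-c) * μ A := by
    simp only [hminus]; rw [lintegral_indicator_const hA]
  rcases le_total 0 c with hc | hc
  · have hmc : ENNReal.ofReal (-c) = 0 := ENNReal.ofReal_eq_zero.2 (by linarith)
    have hPn : ENNReal.ofReal c * μ A ≠ ⊤ := ENNReal.mul_ne_top ENNReal.ofReal_ne_top hμ
    rw [EInt, hP, hN, if_neg hPn, hmc, zero_mul, EReal.coe_ennreal_zero, sub_zero,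
      ennreal_coe_eq_real hPn]
    congr 1
    rw [ENNReal.toReal_mul, ENNReal.toReal_ofReal hc]
  · have hpc : ENNReal.ofReal c = 0 := ENNReal.ofReal_eq_zero.2 hc
    have hNn : ENNReal.ofReal (-c) * μ A ≠ ⊤ := ENNReal.mul_ne_top ENNReal.ofReal_ne_top hμ
    rw [EInt, hP, hN, if_neg (by rw [hpc, zero_mul]; exact ENNReal.zero_ne_top), hpc, zero_mul,
      EReal.coe_ennreal_zero, zero_sub, ennreal_coe_eq_real hNn, ← EReal.coe_neg]
    congr 1
    rw [ENNReal.toReal_mul, ENNReal.toReal_ofReal (by linarith)]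
    ring

lemma ae_le_of_forall_EInt_le {G : MeasurableSpace Ω} (hG : G ≤ mΩ) [IsProbabilityMeasure μ]
    {u v : Ω → EReal} (hu : Measurable[G] u) (hv : Measurable[G] v)
    (H : ∀ α : Ω → ℝ, Measurable[G] α → (∀ ω, 0 ≤ α ω) → (∃ C, ∀ ω, α ω ≤ C) →
      EInt μ (fun ω => (α ω : EReal) * u ω) ≤ EInt μ (fun ω => (α ω : EReal) * v ω)) :
    ∀ᵐ ω ∂μ, u ω ≤ v ω := by
  have key : ∀ q q' : ℚ, q < q' →
      μ (u ⁻¹' (Set.Ioi ((q' : ℝ) : EReal)) ∩ v ⁻¹' (Set.Iio ((q : ℝ) : EReal))) = 0 := by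
    intro q q' hqq'
    set A := u ⁻¹' (Set.Ioi ((q' : ℝ) : EReal)) ∩ v ⁻¹' (Set.Iio ((q : ℝ) : EReal)) with hAdef
    have hAG : MeasurableSet[G] A := (hu measurableSet_Ioi).inter (hv measurableSet_Iio)
    have hAm : MeasurableSet[mΩ] A := hG _ hAG
    set α : Ω → ℝ := A.indicator (fun _ => (1 : ℝ)) with hα
    have hαG : Measurable[G] α := measurable_const.indicator hAG
    have hα0 : ∀ ω, 0 ≤ α ω := fun ω => Set.indicator_nonneg (fun _ _ => zero_le_one) ω
    have hαC : ∃ C, ∀ ω, α ω ≤ C := ⟨1, fun ω => Set.indicator_le_self' (fun _ _ => zero_le_one) ω⟩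
    have hlow : EInt μ (fun ω => A.indicator (fun _ => (((q' : ℝ) : ℝ) : EReal)) ω)
        ≤ EInt μ (fun ω => (α ω : EReal) * u ω) := by
      refine EInt_mono (Filter.Eventually.of_forall fun ω => ?_)
      by_cases h : ω ∈ A
      · rw [Set.indicator_of_mem h, hα, Set.indicator_of_mem h]
        simp only [EReal.coe_one, one_mul]
        exact le_of_lt h.1
      · rw [Set.indicator_of_notMem h, hα, Set.indicator_of_notMem h]
        simp
    have hhigh : EInt μ (fun ω => (α ω : EReal) * v ω)
        ≤ EInt μ (fun ω => A.indicator (fun _ => (((q : ℝ) : ℝ) : EReal)) ω) := by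
      refine EInt_mono (Filter.Eventually.of_forall fun ω => ?_)
      by_cases h : ω ∈ A
      · rw [Set.indicator_of_mem h, hα, Set.indicator_of_mem h]
        simp only [EReal.coe_one, one_mul]
        exact le_of_lt h.2
      · rw [Set.indicator_of_notMem h, hα, Set.indicator_of_notMem h]
        simp
    have hchain := (hlow.trans ((H α hαG hα0 hαC).trans hhigh))
    rw [EInt_indicator_const (μ := μ) hAm ((q' : ℚ) : ℝ),
      EInt_indicator_const (μ := μ) hAm ((q : ℚ) : ℝ)] at hchain
    have hr : (q' : ℝ) * (μ A).toReal ≤ (q : ℝ) * (μ A).toReal := by exact_mod_cast hchain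
    have ht : (μ A).toReal = 0 := by
      by_contra hne
      have hpos : 0 < (μ A).toReal := lt_of_le_of_ne ENNReal.toReal_nonneg (Ne.symm hne)
      have : (q' : ℝ) ≤ q := le_of_mul_le_mul_right (by linarith [hr]) hpos
      exact absurd this (not_le.2 (by exact_mod_cast hqq'))
    exact (ENNReal.toReal_eq_zero_iff _).1 ht |>.resolve_right (measure_ne_top μ A)
  rw [Filter.eventually_iff, mem_ae_iff]
  have hsub : {ω | u ω ≤ v ω}ᶜ ⊆
      ⋃ p : ℚ × ℚ, if p.1 < p.2 then
        u ⁻¹' (Set.Ioi ((p.2 : ℝ) : EReal)) ∩ v ⁻¹' (Set.Iio ((p.1 : ℝ) : EReal)) else ∅ := by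
    intro ω hω
    have hlt : v ω < u ω := not_le.1 hω
    obtain ⟨q, hq1, hq2⟩ := EReal.exists_rat_btwn_of_lt hlt
    obtain ⟨q', hq'1, hq'2⟩ := EReal.exists_rat_btwn_of_lt hq2
    refine Set.mem_iUnion.2 ⟨(q, q'), ?_⟩
    have hqq' : (q : ℚ) < q' := by exact_mod_cast EReal.coe_lt_coe_iff.1 hq'1
    rw [if_pos hqq']
    exact ⟨hq'2, hq1⟩
  refine measure_mono_null hsub (measure_iUnion_null fun p => ?_)
  by_cases hp : p.1 < p.2
  · rw [if_pos hp]; exact key p.1 p.2 hp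
  · rw [if_neg hp]; exact measure_empty

end MoreLemmas

section MCT
variable {mΩ : MeasurableSpace Ω} {μ : Measure Ω}

lemma EInt_eq_of_mono_seq
    {u v : ℕ → Ω → EReal} {U V : Ω → EReal}
    (humeasP : ∀ ν, Measurable fun ω => ePos (u ν ω))
    (humeasN : ∀ ν, Measurable fun ω => ePos (-(u ν ω)))
    (hvmeasP : ∀ ν, Measurable fun ω => ePos (v ν ω))
    (hvmeasN : ∀ ν, Measurable fun ω => ePos (-(v ν ω)))
    (hum : ∀ᵐ ω ∂μ, ∀ ν, u ν ω ≤ u (ν + 1) ω)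
    (hvm : ∀ᵐ ω ∂μ, ∀ ν, v ν ω ≤ v (ν + 1) ω)
    (hU : ∀ ω, U ω = ⨆ ν, u ν ω) (hV : ∀ ω, V ω = ⨆ ν, v ν ω)
    (hNu : ∫⁻ ω, ePos (-(u 0 ω)) ∂μ ≠ ⊤) (hNv : ∫⁻ ω, ePos (-(v 0 ω)) ∂μ ≠ ⊤)
    (heq : ∀ ν, EInt μ (u ν) = EInt μ (v ν)) :
    EInt μ U = EInt μ V := by
  have humo : ∀ᵐ ω ∂μ, Monotone fun ν => u ν ω :=
    hum.mono fun ω h => monotone_nat_of_le_succ h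
  have hvmo : ∀ᵐ ω ∂μ, Monotone fun ν => v ν ω :=
    hvm.mono fun ω h => monotone_nat_of_le_succ h
  set P : ℕ → ℝ≥0∞ := fun ν => ∫⁻ ω, ePos (u ν ω) ∂μ with hPdef
  set N : ℕ → ℝ≥0∞ := fun ν => ∫⁻ ω, ePos (-(u ν ω)) ∂μ with hNdef
  set Q : ℕ → ℝ≥0∞ := fun ν => ∫⁻ ω, ePos (v ν ω) ∂μ with hQdef
  set M : ℕ → ℝ≥0∞ := fun ν => ∫⁻ ω, ePos (-(v ν ω)) ∂μ with hMdef
  have hPmono : Monotone P := fun i j hij =>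
    lintegral_mono_ae (humo.mono fun ω h => monotone_ePos (h hij))
  have hQmono : Monotone Q := fun i j hij =>
    lintegral_mono_ae (hvmo.mono fun ω h => monotone_ePos (h hij))
  have hNanti : Antitone N := fun i j hij =>
    lintegral_mono_ae (humo.mono fun ω h => monotone_ePos (EReal.neg_le_neg_iff.2 (h hij)))
  have hManti : Antitone M := fun i j hij =>
    lintegral_mono_ae (hvmo.mono fun ω h => monotone_ePos (EReal.neg_le_neg_iff.2 (h hij)))
  have hNfin : ∀ ν, N ν ≠ ⊤ := fun ν => ne_top_of_le_ne_top hNu (hNanti (Nat.zero_le ν))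
  have hMfin : ∀ ν, M ν ≠ ⊤ := fun ν => ne_top_of_le_ne_top hNv (hManti (Nat.zero_le ν))
  have hPsup : ∫⁻ ω, ePos (U ω) ∂μ = ⨆ ν, P ν := by
    calc ∫⁻ ω, ePos (U ω) ∂μ = ∫⁻ ω, ⨆ ν, ePos (u ν ω) ∂μ :=
          lintegral_congr fun ω => by rw [hU ω, ePos_iSup]
      _ = ⨆ ν, P ν := lintegral_iSup' (fun ν => (humeasP ν).aemeasurable)
            (humo.mono fun ω h i j hij => monotone_ePos (h hij))
  have hQsup : ∫⁻ ω, ePos (V ω) ∂μ = ⨆ ν, Q ν := by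
    calc ∫⁻ ω, ePos (V ω) ∂μ = ∫⁻ ω, ⨆ ν, ePos (v ν ω) ∂μ :=
          lintegral_congr fun ω => by rw [hV ω, ePos_iSup]
      _ = ⨆ ν, Q ν := lintegral_iSup' (fun ν => (hvmeasP ν).aemeasurable)
            (hvmo.mono fun ω h i j hij => monotone_ePos (h hij))
  have hNinf : ∫⁻ ω, ePos (-(U ω)) ∂μ = ⨅ ν, N ν := by
    calc ∫⁻ ω, ePos (-(U ω)) ∂μ = ∫⁻ ω, ⨅ ν, ePos (-(u ν ω)) ∂μ :=
          lintegral_congr fun ω => by rw [hU ω, ereal_neg_iSup, ePos_iInf]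
      _ = ⨅ ν, N ν := lintegral_iInf_ae (fun ν => humeasN ν)
            (fun ν => hum.mono fun ω h => monotone_ePos (EReal.neg_le_neg_iff.2 (h ν)))
            hNu
  have hMinf : ∫⁻ ω, ePos (-(V ω)) ∂μ = ⨅ ν, M ν := by
    calc ∫⁻ ω, ePos (-(V ω)) ∂μ = ∫⁻ ω, ⨅ ν, ePos (-(v ν ω)) ∂μ :=
          lintegral_congr fun ω => by rw [hV ω, ereal_neg_iSup, ePos_iInf]
      _ = ⨅ ν, M ν := lintegral_iInf_ae (fun ν => hvmeasN ν)
            (fun ν => hvm.mono fun ω h => monotone_ePos (EReal.neg_le_neg_iff.2 (h ν)))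
            hNv
  have hkey : ∀ ν, P ν + M ν = Q ν + N ν := by
    intro ν
    by_cases hPt : P ν = ⊤
    · have h1 : EInt μ (u ν) = ⊤ := EInt_eq_top_iff.2 hPt
      have h2 : Q ν = ⊤ := EInt_eq_top_iff.1 (heq ν ▸ h1)
      rw [hPt, h2, top_add, top_add]
    · have hQt : Q ν ≠ ⊤ := by
        intro hQt
        exact hPt (EInt_eq_top_iff.1 ((heq ν).trans (EInt_eq_top_iff.2 hQt)))
      have h4 := heq ν
      rw [EInt, if_neg hPt, EInt, if_neg hQt] at h4
      exact (enn_coe_sub_eq_iff (Or.inl ⟨hNfin ν, hMfin ν⟩)).1 h4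
  have hsum : (⨆ ν, P ν) + (⨅ ν, M ν) = (⨆ ν, Q ν) + (⨅ ν, N ν) := by
    have t1 : Filter.Tendsto (fun ν => P ν + M ν) Filter.atTop
        (nhds ((⨆ ν, P ν) + (⨅ ν, M ν))) :=
      (tendsto_atTop_iSup hPmono).add (tendsto_atTop_iInf hManti)
    have t2 : Filter.Tendsto (fun ν => Q ν + N ν) Filter.atTop
        (nhds ((⨆ ν, Q ν) + (⨅ ν, N ν))) :=
      (tendsto_atTop_iSup hQmono).add (tendsto_atTop_iInf hNanti)
    rw [show (fun ν => P ν + M ν) = fun ν => Q ν + N ν from funext hkey] at t1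
    exact tendsto_nhds_unique t1 t2
  have hNifin : (⨅ ν, N ν) ≠ ⊤ := ne_top_of_le_ne_top (hNfin 0) (iInf_le N 0)
  have hMifin : (⨅ ν, M ν) ≠ ⊤ := ne_top_of_le_ne_top (hMfin 0) (iInf_le M 0)
  by_cases hPs : (⨆ ν, P ν) = ⊤
  · have hsumfin : (⨆ ν, Q ν) + (⨅ ν, N ν) = ⊤ := by rw [← hsum, hPs, top_add]
    have hQs : (⨆ ν, Q ν) = ⊤ := by
      rcases ENNReal.add_eq_top.1 hsumfin with h | h
      · exact h
      · exact absurd h hNifin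
    rw [EInt_eq_top_iff.2 (by rw [hPsup]; exact hPs),
      EInt_eq_top_iff.2 (by rw [hQsup]; exact hQs)]
  · have hsumfin : (⨆ ν, P ν) + (⨅ ν, M ν) ≠ ⊤ := ENNReal.add_ne_top.2 ⟨hPs, hMifin⟩
    have hQs : (⨆ ν, Q ν) ≠ ⊤ := fun h => hsumfin (by rw [hsum, h, top_add])
    rw [EInt, if_neg (by rw [hPsup]; exact hPs), EInt, if_neg (by rw [hQsup]; exact hQs),
      hPsup, hNinf, hQsup, hMinf]
    exact (enn_coe_sub_eq_iff (Or.inl ⟨hNifin, hMifin⟩)).2 hsum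

end MCT

section Probes
variable {mΩ : MeasurableSpace Ω} {μ : Measure Ω}

lemma EInt_of_nonneg {f : Ω → EReal} (hf : ∀ᵐ ω ∂μ, 0 ≤ f ω) :
    EInt μ f = ((∫⁻ ω, ePos (f ω) ∂μ : ℝ≥0∞) : EReal) := by
  have hN : ∫⁻ ω, ePos (-f ω) ∂μ = 0 := by
    calc ∫⁻ ω, ePos (-f ω) ∂μ = ∫⁻ _, (0:ℝ≥0∞) ∂μ :=
          lintegral_congr_ae (hf.mono fun ω h => by
            dsimp only
            rw [ePos_nonpos (by rw [← neg_zero]; exact EReal.neg_le_neg_iff.2 h)])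
      _ = 0 := lintegral_zero
  by_cases hP : ∫⁻ ω, ePos (f ω) ∂μ = ⊤
  · rw [EInt, if_pos hP, hP, EReal.coe_ennreal_top]
  · rw [EInt, if_neg hP, hN, EReal.coe_ennreal_zero, sub_zero]

lemma EInt_eq_of_sums {F F' : Ω → EReal}
    (hsum : (∫⁻ ω, ePos (F' ω) ∂μ) + (∫⁻ ω, ePos (-F ω) ∂μ)
      = (∫⁻ ω, ePos (F ω) ∂μ) + (∫⁻ ω, ePos (-F' ω) ∂μ))
    (hside : ((∫⁻ ω, ePos (-F' ω) ∂μ) ≠ ⊤ ∧ (∫⁻ ω, ePos (-F ω) ∂μ) ≠ ⊤)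
      ∨ ((∫⁻ ω, ePos (F' ω) ∂μ) ≠ ⊤ ∧ (∫⁻ ω, ePos (F ω) ∂μ) ≠ ⊤)) :
    EInt μ F' = EInt μ F := by
  rcases hside with ⟨hN', hN⟩ | ⟨hP', hP⟩
  · by_cases hP' : ∫⁻ ω, ePos (F' ω) ∂μ = ⊤
    · have hP : ∫⁻ ω, ePos (F ω) ∂μ = ⊤ := by
        rcases ENNReal.add_eq_top.1 (by rw [← hsum, hP', top_add] :
          (∫⁻ ω, ePos (F ω) ∂μ) + (∫⁻ ω, ePos (-F' ω) ∂μ) = ⊤) with hh | hh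
        · exact hh
        · exact absurd hh hN'
      rw [EInt, if_pos hP', EInt, if_pos hP]
    · have hP : ∫⁻ ω, ePos (F ω) ∂μ ≠ ⊤ := by
        intro hh
        exact hP' (by
          rcases ENNReal.add_eq_top.1 (by rw [hsum, hh, top_add] :
            (∫⁻ ω, ePos (F' ω) ∂μ) + (∫⁻ ω, ePos (-F ω) ∂μ) = ⊤) with h2 | h2
          · exact h2
          · exact absurd h2 hN)
      rw [EInt, if_neg hP', EInt, if_neg hP]
      exact (enn_coe_sub_eq_iff (Or.inl ⟨hN', hN⟩)).2 hsum
  · rw [EInt, if_neg hP', EInt, if_neg hP]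
    exact (enn_coe_sub_eq_iff (Or.inr ⟨hP', hP⟩)).2 hsum

lemma probe_neg {G : MeasurableSpace Ω} (hG : G ≤ mΩ) {W Z : Ω → EReal} {D : Set Ω}
    (hDG : MeasurableSet[G] D) (hW : Measurable[G] W)
    (H : ∀ α : Ω → ℝ, Measurable[G] α → (∀ ω, 0 ≤ α ω) → (∃ C, ∀ ω, α ω ≤ C) →
      EInt μ (fun ω => (α ω : EReal) * D.indicator W ω)
        = EInt μ (fun ω => (α ω : EReal) * D.indicator Z ω)) :
    ∫⁻ ω, D.indicator (fun ω' => ePos (-(W ω'))) ω ∂μ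
      ≤ ∫⁻ ω, D.indicator (fun ω' => ePos (-(Z ω'))) ω ∂μ := by
  by_cases hRHS : ∫⁻ ω, D.indicator (fun ω' => ePos (-(Z ω'))) ω ∂μ = ⊤
  · rw [hRHS]; exact le_top
  set A := D ∩ W ⁻¹' (Set.Iio 0) with hAdef
  have hAG : MeasurableSet[G] A := hDG.inter (hW measurableSet_Iio)
  set α : Ω → ℝ := A.indicator fun _ => (1:ℝ) with hαdef
  have h1 := H α (measurable_const.indicator hAG)
    (fun ω => Set.indicator_nonneg (fun _ _ => zero_le_one) ω)
    ⟨1, fun ω => Set.indicator_le_self' (fun _ _ => zero_le_one) ω⟩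
  have hfl : (fun ω => (α ω : EReal) * D.indicator W ω) = fun ω => A.indicator W ω := by
    funext ω
    by_cases hωA : ω ∈ A
    · rw [hαdef]
      rw [Set.indicator_of_mem hωA, Set.indicator_of_mem hωA.1, Set.indicator_of_mem hωA]
      simp
    · rw [hαdef, Set.indicator_of_notMem hωA, Set.indicator_of_notMem hωA]
      simp
  have hfr : (fun ω => (α ω : EReal) * D.indicator Z ω) = fun ω => A.indicator Z ω := by
    funext ω
    by_cases hωA : ω ∈ A
    · rw [hαdef]
      rw [Set.indicator_of_mem hωA, Set.indicator_of_mem hωA.1, Set.indicator_of_mem hωA]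
      simp
    · rw [hαdef, Set.indicator_of_notMem hωA, Set.indicator_of_notMem hωA]
      simp
  rw [hfl, hfr] at h1
  have hWle : ∀ ω, A.indicator W ω ≤ 0 := by
    intro ω
    by_cases hωA : ω ∈ A
    · rw [Set.indicator_of_mem hωA]; exact le_of_lt hωA.2
    · rw [Set.indicator_of_notMem hωA]
  rw [EInt_of_nonpos (Filter.Eventually.of_forall hWle)] at h1
  have hNl : ∫⁻ ω, ePos (-(A.indicator W ω)) ∂μ
      = ∫⁻ ω, D.indicator (fun ω' => ePos (-(W ω'))) ω ∂μ := by
    apply lintegral_congr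
    intro ω
    by_cases hωA : ω ∈ A
    · rw [Set.indicator_of_mem hωA, Set.indicator_of_mem hωA.1]
    · rw [Set.indicator_of_notMem hωA, neg_zero, ePos_zero]
      by_cases hωD : ω ∈ D
      · rw [Set.indicator_of_mem hωD]
        have hW0 : 0 ≤ W ω := by
          by_contra hcon
          exact hωA ⟨hωD, not_le.1 hcon⟩
        rw [ePos_nonpos (by rw [← neg_zero]; exact EReal.neg_le_neg_iff.2 hW0)]
      · rw [Set.indicator_of_notMem hωD]
  have hZbound : ∫⁻ ω, ePos (-(A.indicator Z ω)) ∂μ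
      ≤ ∫⁻ ω, D.indicator (fun ω' => ePos (-(Z ω'))) ω ∂μ := by
    apply lintegral_mono
    intro ω
    dsimp only
    by_cases hωA : ω ∈ A
    · rw [Set.indicator_of_mem hωA, Set.indicator_of_mem hωA.1]
    · rw [Set.indicator_of_notMem hωA, neg_zero, ePos_zero]
      exact zero_le
  have hlow : -((∫⁻ ω, ePos (-(A.indicator Z ω)) ∂μ : ℝ≥0∞) : EReal)
      ≤ EInt μ (fun ω => A.indicator Z ω) := neg_lintegral_le_EInt
  rw [← h1] at hlow
  rw [EReal.neg_le_neg_iff] at hlow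
  rw [← hNl]
  exact le_trans (EReal.coe_ennreal_le_coe_ennreal_iff.1 hlow) hZbound

lemma probe_pos {G : MeasurableSpace Ω} (hG : G ≤ mΩ) {W Z : Ω → EReal} {D : Set Ω}
    (hDG : MeasurableSet[G] D) (hW : Measurable[G] W)
    (H : ∀ α : Ω → ℝ, Measurable[G] α → (∀ ω, 0 ≤ α ω) → (∃ C, ∀ ω, α ω ≤ C) →
      EInt μ (fun ω => (α ω : EReal) * D.indicator W ω)
        = EInt μ (fun ω => (α ω : EReal) * D.indicator Z ω)) :
    ∫⁻ ω, D.indicator (fun ω' => ePos (W ω')) ω ∂μ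
      ≤ ∫⁻ ω, D.indicator (fun ω' => ePos (Z ω')) ω ∂μ := by
  set A := D ∩ W ⁻¹' (Set.Ioi 0) with hAdef
  have hAG : MeasurableSet[G] A := hDG.inter (hW measurableSet_Ioi)
  set α : Ω → ℝ := A.indicator fun _ => (1:ℝ) with hαdef
  have h1 := H α (measurable_const.indicator hAG)
    (fun ω => Set.indicator_nonneg (fun _ _ => zero_le_one) ω)
    ⟨1, fun ω => Set.indicator_le_self' (fun _ _ => zero_le_one) ω⟩
  have hfl : (fun ω => (α ω : EReal) * D.indicator W ω) = fun ω => A.indicator W ω := by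
    funext ω
    by_cases hωA : ω ∈ A
    · rw [hαdef]
      rw [Set.indicator_of_mem hωA, Set.indicator_of_mem hωA.1, Set.indicator_of_mem hωA]
      simp
    · rw [hαdef, Set.indicator_of_notMem hωA, Set.indicator_of_notMem hωA]
      simp
  have hfr : (fun ω => (α ω : EReal) * D.indicator Z ω) = fun ω => A.indicator Z ω := by
    funext ω
    by_cases hωA : ω ∈ A
    · rw [hαdef]
      rw [Set.indicator_of_mem hωA, Set.indicator_of_mem hωA.1, Set.indicator_of_mem hωA]
      simp
    · rw [hαdef, Set.indicator_of_notMem hωA, Set.indicator_of_notMem hωA]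
      simp
  rw [hfl, hfr] at h1
  have hWge : ∀ ω, 0 ≤ A.indicator W ω := by
    intro ω
    by_cases hωA : ω ∈ A
    · rw [Set.indicator_of_mem hωA]; exact le_of_lt hωA.2
    · rw [Set.indicator_of_notMem hωA]
  rw [EInt_of_nonneg (Filter.Eventually.of_forall hWge)] at h1
  have hPl : ∫⁻ ω, ePos (A.indicator W ω) ∂μ
      = ∫⁻ ω, D.indicator (fun ω' => ePos (W ω')) ω ∂μ := by
    apply lintegral_congr
    intro ω
    by_cases hωA : ω ∈ A
    · rw [Set.indicator_of_mem hωA, Set.indicator_of_mem hωA.1]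
    · rw [Set.indicator_of_notMem hωA, ePos_zero]
      by_cases hωD : ω ∈ D
      · rw [Set.indicator_of_mem hωD]
        have hW0 : W ω ≤ 0 := by
          by_contra hcon
          exact hωA ⟨hωD, not_le.1 hcon⟩
        rw [ePos_nonpos hW0]
      · rw [Set.indicator_of_notMem hωD]
  have hZbound : ∫⁻ ω, ePos (A.indicator Z ω) ∂μ
      ≤ ∫⁻ ω, D.indicator (fun ω' => ePos (Z ω')) ω ∂μ := by
    apply lintegral_mono
    intro ω
    dsimp only
    by_cases hωA : ω ∈ A
    · rw [Set.indicator_of_mem hωA, Set.indicator_of_mem hωA.1]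
    · rw [Set.indicator_of_notMem hωA, ePos_zero]
      exact zero_le
  have hhigh : EInt μ (fun ω => A.indicator Z ω)
      ≤ ((∫⁻ ω, ePos (A.indicator Z ω) ∂μ : ℝ≥0∞) : EReal) := EInt_le_lintegral
  rw [← h1] at hhigh
  rw [← hPl]
  exact (EReal.coe_ennreal_le_coe_ennreal_iff.1 hhigh).trans hZbound

end Probes

section Partition
variable {mΩ : MeasurableSpace Ω} {μ : Measure Ω}

lemma EInt_eq_of_partition {F F' : Ω → EReal} {B : ℕ → Set Ω}
    (hmeasB : ∀ k, MeasurableSet (B k)) (hdisj : Pairwise (Function.onFun Disjoint B))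
    (hcover : (⋃ k, B k) = Set.univ)
    (hE : ∀ k, EInt μ (fun ω => (B k).indicator F' ω) = EInt μ (fun ω => (B k).indicator F ω))
    (hside : ((∫⁻ ω, ePos (-F' ω) ∂μ) ≠ ⊤ ∧ (∫⁻ ω, ePos (-F ω) ∂μ) ≠ ⊤)
      ∨ ((∫⁻ ω, ePos (F' ω) ∂μ) ≠ ⊤ ∧ (∫⁻ ω, ePos (F ω) ∂μ) ≠ ⊤)) :
    EInt μ F' = EInt μ F := by
  set p' : ℕ → ℝ≥0∞ := fun k => ∫⁻ ω, (B k).indicator (fun ω' => ePos (F' ω')) ω ∂μ with hp'def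
  set n' : ℕ → ℝ≥0∞ := fun k => ∫⁻ ω, (B k).indicator (fun ω' => ePos (-F' ω')) ω ∂μ with hn'def
  set p : ℕ → ℝ≥0∞ := fun k => ∫⁻ ω, (B k).indicator (fun ω' => ePos (F ω')) ω ∂μ with hpdef
  set n : ℕ → ℝ≥0∞ := fun k => ∫⁻ ω, (B k).indicator (fun ω' => ePos (-F ω')) ω ∂μ with hndef
  have hPid : ∀ k, ∫⁻ ω, ePos ((B k).indicator F' ω) ∂μ = p' k :=
    fun k => lintegral_congr fun ω => ePos_indicator _ _ _
  have hNid : ∀ k, ∫⁻ ω, ePos (-(B k).indicator F' ω) ∂μ = n' k :=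
    fun k => lintegral_congr fun ω => by rw [neg_indicator', ePos_indicator]
  have hPid2 : ∀ k, ∫⁻ ω, ePos ((B k).indicator F ω) ∂μ = p k :=
    fun k => lintegral_congr fun ω => ePos_indicator _ _ _
  have hNid2 : ∀ k, ∫⁻ ω, ePos (-(B k).indicator F ω) ∂μ = n k :=
    fun k => lintegral_congr fun ω => by rw [neg_indicator', ePos_indicator]
  have hPg : ∫⁻ ω, ePos (F' ω) ∂μ = ∑' k, p' k :=
    lintegral_eq_tsum_partition hmeasB hdisj hcover _
  have hNg : ∫⁻ ω, ePos (-F' ω) ∂μ = ∑' k, n' k :=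
    lintegral_eq_tsum_partition hmeasB hdisj hcover _
  have hPg2 : ∫⁻ ω, ePos (F ω) ∂μ = ∑' k, p k :=
    lintegral_eq_tsum_partition hmeasB hdisj hcover _
  have hNg2 : ∫⁻ ω, ePos (-F ω) ∂μ = ∑' k, n k :=
    lintegral_eq_tsum_partition hmeasB hdisj hcover _
  have hple : ∀ k, p' k ≤ ∫⁻ ω, ePos (F' ω) ∂μ :=
    fun k => lintegral_mono fun ω => Set.indicator_le_self _ _ ω
  have hnle : ∀ k, n' k ≤ ∫⁻ ω, ePos (-F' ω) ∂μ :=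
    fun k => lintegral_mono fun ω => Set.indicator_le_self _ _ ω
  have hple2 : ∀ k, p k ≤ ∫⁻ ω, ePos (F ω) ∂μ :=
    fun k => lintegral_mono fun ω => Set.indicator_le_self _ _ ω
  have hnle2 : ∀ k, n k ≤ ∫⁻ ω, ePos (-F ω) ∂μ :=
    fun k => lintegral_mono fun ω => Set.indicator_le_self _ _ ω
  have hkey : ∀ k, p' k + n k = p k + n' k := by
    intro k
    rcases hside with ⟨hN', hN⟩ | ⟨hP', hP⟩
    · have hnk : n k ≠ ⊤ := ne_top_of_le_ne_top hN (hnle2 k)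
      have hnk' : n' k ≠ ⊤ := ne_top_of_le_ne_top hN' (hnle k)
      by_cases hpk' : p' k = ⊤
      · have h1 : EInt μ (fun ω => (B k).indicator F' ω) = ⊤ :=
          EInt_eq_top_iff.2 (by rw [hPid k]; exact hpk')
        have h2 : p k = ⊤ := by
          have h3 := EInt_eq_top_iff.1 ((hE k).symm.trans h1)
          rw [hPid2 k] at h3; exact h3
        rw [hpk', h2, top_add, top_add]
      · have hpk : p k ≠ ⊤ := by
          intro hh
          apply hpk'
          have h1 : EInt μ (fun ω => (B k).indicator F ω) = ⊤ :=
            EInt_eq_top_iff.2 (by rw [hPid2 k]; exact hh)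
          have h3 := EInt_eq_top_iff.1 ((hE k).trans h1)
          rw [hPid k] at h3; exact h3
        have e1 := hE k
        rw [EInt, EInt, hPid k, hNid k, hPid2 k, hNid2 k, if_neg hpk', if_neg hpk] at e1
        exact (enn_coe_sub_eq_iff (Or.inl ⟨hnk', hnk⟩)).1 e1
    · have hpk : p k ≠ ⊤ := ne_top_of_le_ne_top hP (hple2 k)
      have hpk' : p' k ≠ ⊤ := ne_top_of_le_ne_top hP' (hple k)
      have e1 := hE k
      rw [EInt, EInt, hPid k, hNid k, hPid2 k, hNid2 k, if_neg hpk', if_neg hpk] at e1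
      exact (enn_coe_sub_eq_iff (Or.inr ⟨hpk', hpk⟩)).1 e1
  apply EInt_eq_of_sums _ hside
  rw [hPg, hNg, hPg2, hNg2, ← ENNReal.tsum_add, ← ENNReal.tsum_add]
  exact tsum_congr hkey

end Partition

section Helpers
variable {mΩ : MeasurableSpace Ω} {μ : Measure Ω}

lemma lintegral_ePos_neg_mul_le {α : Ω → ℝ} {g : Ω → EReal} {C : ℝ}
    (hα0 : ∀ ω, 0 ≤ α ω) (hC : ∀ ω, α ω ≤ C) :
    ∫⁻ ω, ePos (-((α ω : EReal) * g ω)) ∂μ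
      ≤ ENNReal.ofReal C * ∫⁻ ω, ePos (-(g ω)) ∂μ := by
  have hpt : ∀ ω, ePos (-((α ω : EReal) * g ω)) ≤ ENNReal.ofReal C * ePos (-(g ω)) := by
    intro ω
    rw [← mul_neg, ePos_mul_coe (hα0 ω)]
    exact mul_le_mul_left (ENNReal.ofReal_le_ofReal (hC ω)) _
  calc ∫⁻ ω, ePos (-((α ω : EReal) * g ω)) ∂μ
      ≤ ∫⁻ ω, ENNReal.ofReal C * ePos (-(g ω)) ∂μ := lintegral_mono hpt
    _ = ENNReal.ofReal C * ∫⁻ ω, ePos (-(g ω)) ∂μ :=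
        lintegral_const_mul' _ _ ENNReal.ofReal_ne_top

lemma lintegral_ePos_mul_le {α : Ω → ℝ} {g : Ω → EReal} {C : ℝ}
    (hα0 : ∀ ω, 0 ≤ α ω) (hC : ∀ ω, α ω ≤ C) :
    ∫⁻ ω, ePos ((α ω : EReal) * g ω) ∂μ
      ≤ ENNReal.ofReal C * ∫⁻ ω, ePos (g ω) ∂μ := by
  have hpt : ∀ ω, ePos ((α ω : EReal) * g ω) ≤ ENNReal.ofReal C * ePos (g ω) := by
    intro ω
    rw [ePos_mul_coe (hα0 ω)]
    exact mul_le_mul_left (ENNReal.ofReal_le_ofReal (hC ω)) _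
  calc ∫⁻ ω, ePos ((α ω : EReal) * g ω) ∂μ
      ≤ ∫⁻ ω, ENNReal.ofReal C * ePos (g ω) ∂μ := lintegral_mono hpt
    _ = ENNReal.ofReal C * ∫⁻ ω, ePos (g ω) ∂μ :=
        lintegral_const_mul' _ _ ENNReal.ofReal_ne_top

end Helpers

theorem statement2_main {Ω : Type*} {mΩ : MeasurableSpace Ω} (μ : Measure Ω)
    [IsProbabilityMeasure μ]
    (G : MeasurableSpace Ω) (hG : G ≤ mΩ) (n : ℕ)
    (h : ℕ → EuclideanSpace ℝ (Fin n) → Ω → EReal)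
    (hNI : ∀ ν, IsNormalIntegrand mΩ (h ν))
    (hLB : ∀ ν, LBounded μ (h ν))
    (hmono : ∀ ν x ω, h ν x ω ≤ h (ν + 1) x ω)
    (hhat : ℕ → EuclideanSpace ℝ (Fin n) → Ω → EReal)
    (hce : ∀ ν, IsCondNI μ G (h ν) (hhat ν)) :
    IsCondNI μ G (fun x ω => ⨆ ν, h ν x ω) (fun x ω => ⨆ ν, hhat ν x ω) := by
  classical
  constructor
  · refine ⟨?_, ?_, ?_⟩
    · exact Measurable.iSup fun ν => (hce ν).1.1
    · intro ω
      exact lowerSemicontinuous_iSup fun ν => (hce ν).1.2.1 ω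
    · intro y ω hbot
      have hbot' : (⨆ ν, hhat ν y ω) = ⊥ := hbot
      have hle : hhat 0 y ω ≤ ⨆ ν, hhat ν y ω := le_iSup (fun ν => hhat ν y ω) 0
      rw [hbot'] at hle
      exact (hce 0).1.2.2 y ω (le_bot_iff.1 hle)
  · intro x hx hqi0
    set ξ' : Ω → EReal := fun ω => ⨆ ν, hhat ν (x ω) ω with hξ'def
    set ξ : Ω → EReal := fun ω => ⨆ ν, h ν (x ω) ω with hξdef
    have hqi : QuasiIntegrable μ ξ := hqi0
    obtain ⟨ρ, m, hρint, hmint, hρ0, hm0, hbd⟩ :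
        ∃ ρ m : ℕ → Ω → ℝ, (∀ ν, Integrable (ρ ν) μ) ∧ (∀ ν, Integrable (m ν) μ) ∧
          (∀ ν ω, 0 ≤ ρ ν ω) ∧ (∀ ν ω, 0 ≤ m ν ω) ∧
          (∀ ν, ∀ᵐ ω ∂μ, ∀ y : EuclideanSpace ℝ (Fin n),
            (↑(-(ρ ν ω * ‖y‖ + m ν ω)) : EReal) ≤ h ν y ω) := by
      choose ρ m h1 h2 h3 h4 h5 using hLB
      exact ⟨ρ, m, h1, h2, h3, h4, h5⟩
    have hcomp : ∀ (m' : MeasurableSpace Ω) (f : EuclideanSpace ℝ (Fin n) → Ω → EReal),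
        Measurable[MeasurableSpace.prod inferInstance m']
          (fun p : (EuclideanSpace ℝ (Fin n)) × Ω => f p.1 p.2) →
        ∀ y : Ω → EuclideanSpace ℝ (Fin n), Measurable[m'] y →
        Measurable[m'] fun ω => f (y ω) ω := by
      intro m' f hf y hy
      have hpair : @Measurable Ω (EuclideanSpace ℝ (Fin n) × Ω) m'
          (MeasurableSpace.prod inferInstance m') (fun ω => (y ω, ω)) :=
        Measurable.prod (by exact hy) (by exact measurable_id)
      exact hf.comp hpair
    have hhatG : ∀ ν, ∀ y : Ω → EuclideanSpace ℝ (Fin n), Measurable[G] y →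
        Measurable[G] fun ω => hhat ν (y ω) ω :=
      fun ν y hy => hcomp G (hhat ν) (hce ν).1.1 y hy
    have hξ'G : Measurable[G] ξ' := Measurable.iSup fun ν => hhatG ν x hx
    refine ⟨hξ'G, ?_⟩
    intro α hαG hα0 hαC
    obtain ⟨Cα, hCα⟩ := hαC
    -- the partition
    set A : ℕ → Set Ω := fun k => {ω | ‖x ω‖ ≤ (k : ℝ)} with hAdef
    have hAG : ∀ k, MeasurableSet[G] (A k) := by
      intro k
      have hnorm : Measurable[G] fun ω => ‖x ω‖ := measurable_norm.comp hx
      exact hnorm measurableSet_Iic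
    set B : ℕ → Set Ω := disjointed A with hBdef
    have hBG : ∀ k, MeasurableSet[G] (B k) := MeasurableSet.disjointed hAG
    have hBm : ∀ k, MeasurableSet[mΩ] (B k) := fun k => hG _ (hBG k)
    have hBdisj : Pairwise (Function.onFun Disjoint B) := disjoint_disjointed A
    have hBcover : (⋃ k, B k) = Set.univ := by
      rw [hBdef, iUnion_disjointed]
      ext ω
      simp only [Set.mem_iUnion, Set.mem_univ, iff_true]
      obtain ⟨k, hk⟩ := exists_nat_ge ‖x ω‖
      exact ⟨k, hk⟩
    have hBsubA : ∀ k, B k ⊆ A k := disjointed_subset A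
    -- truncations
    set xk : ℕ → Ω → EuclideanSpace ℝ (Fin n) :=
      fun k => (A k).piecewise x (fun _ => 0) with hxkdef
    have hxkG : ∀ k, Measurable[G] (xk k) :=
      fun k => Measurable.piecewise (hAG k) hx measurable_const
    have hxk_mem : ∀ k, ∀ ω ∈ A k, xk k ω = x ω :=
      fun k ω hω => Set.piecewise_eq_of_mem _ _ _ hω
    have hxk_norm : ∀ k ω, ‖xk k ω‖ ≤ (k : ℝ) := by
      intro k ω
      by_cases hω : ω ∈ A k
      · rw [hxk_mem k ω hω]; exact hω
      · rw [hxkdef]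
        simp only [Set.piecewise_eq_of_notMem _ _ _ hω, norm_zero]
        exact Nat.cast_nonneg k
    -- quasi-integrability of the truncated compositions
    have hζNbound : ∀ ν k, ∫⁻ ω, ePos (-(h ν (xk k ω) ω)) ∂μ ≠ ⊤ := by
      intro ν k
      have hint := ((hρint ν).mul_const (k : ℝ)).add (hmint ν)
      have hb : ∀ᵐ ω ∂μ, ePos (-(h ν (xk k ω) ω)) ≤ ENNReal.ofReal (ρ ν ω * (k : ℝ) + m ν ω) := by
        filter_upwards [hbd ν] with ω hω
        have h1 := hω (xk k ω)
        rw [EReal.coe_neg] at h1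
        have h2 : -(h ν (xk k ω) ω) ≤ ((ρ ν ω * ‖xk k ω‖ + m ν ω : ℝ) : EReal) := EReal.neg_le.1 h1
        calc ePos (-(h ν (xk k ω) ω))
            ≤ ePos ((ρ ν ω * ‖xk k ω‖ + m ν ω : ℝ) : EReal) := monotone_ePos h2
          _ = ENNReal.ofReal (ρ ν ω * ‖xk k ω‖ + m ν ω) := ePos_coe _
          _ ≤ ENNReal.ofReal (ρ ν ω * (k : ℝ) + m ν ω) := by
              apply ENNReal.ofReal_le_ofReal
              have := mul_le_mul_of_nonneg_left (hxk_norm k ω) (hρ0 ν ω)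
              linarith
      exact ne_top_of_le_ne_top (@Integrable.lintegral_lt_top Ω mΩ μ _ hint).ne (lintegral_mono_ae hb)
    have hrel : ∀ ν k, IsCondExpER μ G (fun ω => h ν (xk k ω) ω)
        (fun ω => hhat ν (xk k ω) ω) :=
      fun ν k => (hce ν).2 (xk k) (hxkG k) (Or.inr (hζNbound ν k))
    have hζ'G : ∀ ν k, Measurable[G] fun ω => hhat ν (xk k ω) ω := fun ν k => (hrel ν k).1
    have hζ'm : ∀ ν k, Measurable[mΩ] fun ω => hhat ν (xk k ω) ω :=
      fun ν k => (hζ'G ν k).mono hG le_rfl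
    have hζm : ∀ ν k, Measurable[mΩ] fun ω => h ν (xk k ω) ω :=
      fun ν k => hcomp mΩ (h ν) (hNI ν).1 (xk k) ((hxkG k).mono hG le_rfl)
    -- a.e. monotonicity of the conditional expectations along ν
    have hζ'mono : ∀ k, ∀ᵐ ω ∂μ, ∀ ν, hhat ν (xk k ω) ω ≤ hhat (ν + 1) (xk k ω) ω := by
      intro k
      rw [ae_all_iff]
      intro ν
      apply ae_le_of_forall_EInt_le hG (hζ'G ν k) (hζ'G (ν + 1) k)
      intro β hβG hβ0 hβC
      rw [(hrel ν k).2 β hβG hβ0 hβC, (hrel (ν + 1) k).2 β hβG hβ0 hβC]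
      exact EInt_mono (Filter.Eventually.of_forall fun ω =>
        mul_le_mul_of_nonneg_left (hmono ν (xk k ω) ω) (by exact_mod_cast hβ0 ω))
    -- integrability of the negative part of hhat 0 along the truncations
    have hζ'0fin : ∀ k, ∫⁻ ω, ePos (-(hhat 0 (xk k ω) ω)) ∂μ ≠ ⊤ := by
      intro k
      have hH : ∀ β : Ω → ℝ, Measurable[G] β → (∀ ω, 0 ≤ β ω) → (∃ C, ∀ ω, β ω ≤ C) →
          EInt μ (fun ω => (β ω : EReal) * Set.univ.indicator (fun ω' => hhat 0 (xk k ω') ω') ω)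
            = EInt μ (fun ω => (β ω : EReal)
                * Set.univ.indicator (fun ω' => h 0 (xk k ω') ω') ω) := by
        intro β hβG hβ0 hβC
        simp only [Set.indicator_univ]
        exact (hrel 0 k).2 β hβG hβ0 hβC
      have hpn := probe_neg (μ := μ) hG MeasurableSet.univ (hζ'G 0 k) hH
      simp only [Set.indicator_univ] at hpn
      exact ne_top_of_le_ne_top (hζNbound 0 k) hpn
    -- identification of the truncated suprema on B k
    have hSup_eq' : ∀ k, ∀ ω ∈ B k, (⨆ ν, hhat ν (xk k ω) ω) = ξ' ω := by
      intro k ω hω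
      rw [hξ'def]
      exact iSup_congr fun ν => by rw [hxk_mem k ω (hBsubA k hω)]
    have hSup_eq : ∀ k, ∀ ω ∈ B k, (⨆ ν, h ν (xk k ω) ω) = ξ ω := by
      intro k ω hω
      rw [hξdef]
      exact iSup_congr fun ν => by rw [hxk_mem k ω (hBsubA k hω)]
    -- the key per-piece relation
    have R : ∀ k, ∀ β : Ω → ℝ, Measurable[G] β → (∀ ω, 0 ≤ β ω) → (∃ C, ∀ ω, β ω ≤ C) →
        EInt μ (fun ω => (β ω : EReal) * (B k).indicator ξ' ω)
          = EInt μ (fun ω => (β ω : EReal) * (B k).indicator ξ ω) := by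
      intro k β hβG hβ0 hβC
      obtain ⟨Cβ, hCβ⟩ := hβC
      set γ : Ω → ℝ := (B k).indicator β with hγdef
      have hγG : Measurable[G] γ := hβG.indicator (hBG k)
      have hγm : Measurable[mΩ] γ := hγG.mono hG le_rfl
      have hγ0 : ∀ ω, 0 ≤ γ ω := fun ω => Set.indicator_nonneg (fun ω' _ => hβ0 ω') ω
      have hγC : ∀ ω, γ ω ≤ max Cβ 0 := by
        intro ω
        by_cases hω : ω ∈ B k
        · rw [hγdef, Set.indicator_of_mem hω]; exact le_max_of_le_left (hCβ ω)
        · rw [hγdef, Set.indicator_of_notMem hω]; exact le_max_right _ _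
      have hMC := EInt_eq_of_mono_seq (μ := μ)
        (u := fun ν ω => (γ ω : EReal) * hhat ν (xk k ω) ω)
        (v := fun ν ω => (γ ω : EReal) * h ν (xk k ω) ω)
        (U := fun ω => (γ ω : EReal) * (⨆ ν, hhat ν (xk k ω) ω))
        (V := fun ω => (γ ω : EReal) * (⨆ ν, h ν (xk k ω) ω))
        (fun ν => by
          have hfe : (fun ω => ePos ((γ ω : EReal) * hhat ν (xk k ω) ω))
              = fun ω => ENNReal.ofReal (γ ω) * ePos (hhat ν (xk k ω) ω) :=
            funext fun ω => ePos_mul_coe (hγ0 ω) _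
          rw [hfe]
          exact (ENNReal.measurable_ofReal.comp hγm).mul (measurable_ePos.comp (hζ'm ν k)))
        (fun ν => by
          have hfe : (fun ω => ePos (-((γ ω : EReal) * hhat ν (xk k ω) ω)))
              = fun ω => ENNReal.ofReal (γ ω) * ePos (-(hhat ν (xk k ω) ω)) :=
            funext fun ω => by rw [← mul_neg, ePos_mul_coe (hγ0 ω)]
          rw [hfe]
          exact (ENNReal.measurable_ofReal.comp hγm).mul
            (measurable_ePos.comp (hζ'm ν k).neg))
        (fun ν => by
          have hfe : (fun ω => ePos ((γ ω : EReal) * h ν (xk k ω) ω))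
              = fun ω => ENNReal.ofReal (γ ω) * ePos (h ν (xk k ω) ω) :=
            funext fun ω => ePos_mul_coe (hγ0 ω) _
          rw [hfe]
          exact (ENNReal.measurable_ofReal.comp hγm).mul (measurable_ePos.comp (hζm ν k)))
        (fun ν => by
          have hfe : (fun ω => ePos (-((γ ω : EReal) * h ν (xk k ω) ω)))
              = fun ω => ENNReal.ofReal (γ ω) * ePos (-(h ν (xk k ω) ω)) :=
            funext fun ω => by rw [← mul_neg, ePos_mul_coe (hγ0 ω)]
          rw [hfe]
          exact (ENNReal.measurable_ofReal.comp hγm).mul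
            (measurable_ePos.comp (hζm ν k).neg))
        (by
          filter_upwards [hζ'mono k] with ω hω ν
          exact mul_le_mul_of_nonneg_left (hω ν) (by exact_mod_cast hγ0 ω))
        (Filter.Eventually.of_forall fun ω ν =>
          mul_le_mul_of_nonneg_left (hmono ν (xk k ω) ω) (by exact_mod_cast hγ0 ω))
        (fun ω => coe_mul_iSup (hγ0 ω) _)
        (fun ω => coe_mul_iSup (hγ0 ω) _)
        (ne_top_of_le_ne_top
          (ENNReal.mul_ne_top ENNReal.ofReal_ne_top (hζ'0fin k))
          (lintegral_ePos_neg_mul_le hγ0 hγC))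
        (ne_top_of_le_ne_top
          (ENNReal.mul_ne_top ENNReal.ofReal_ne_top (hζNbound 0 k))
          (lintegral_ePos_neg_mul_le hγ0 hγC))
        (fun ν => (hrel ν k).2 γ hγG hγ0 ⟨max Cβ 0, hγC⟩)
      have hL : (fun ω => (γ ω : EReal) * (⨆ ν, hhat ν (xk k ω) ω))
          = fun ω => (β ω : EReal) * (B k).indicator ξ' ω := by
        funext ω
        by_cases hω : ω ∈ B k
        · rw [hγdef]
          rw [Set.indicator_of_mem hω, Set.indicator_of_mem hω, hSup_eq' k ω hω]
        · rw [hγdef, Set.indicator_of_notMem hω, Set.indicator_of_notMem hω]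
          rw [EReal.coe_zero, zero_mul, mul_zero]
      have hRr : (fun ω => (γ ω : EReal) * (⨆ ν, h ν (xk k ω) ω))
          = fun ω => (β ω : EReal) * (B k).indicator ξ ω := by
        funext ω
        by_cases hω : ω ∈ B k
        · rw [hγdef]
          rw [Set.indicator_of_mem hω, Set.indicator_of_mem hω, hSup_eq k ω hω]
        · rw [hγdef, Set.indicator_of_notMem hω, Set.indicator_of_notMem hω]
          rw [EReal.coe_zero, zero_mul, mul_zero]
      rw [← hL, ← hRr]
      exact hMC
    -- per-piece relation for the fixed α, in indicator form
    have hEk : ∀ k, EInt μ (fun ω => (B k).indicator (fun ω' => (α ω' : EReal) * ξ' ω') ω)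
        = EInt μ (fun ω => (B k).indicator (fun ω' => (α ω' : EReal) * ξ ω') ω) := by
      intro k
      have h1 := R k α hαG hα0 ⟨Cα, hCα⟩
      have hL : (fun ω => (α ω : EReal) * (B k).indicator ξ' ω)
          = fun ω => (B k).indicator (fun ω' => (α ω' : EReal) * ξ' ω') ω := by
        funext ω
        by_cases hω : ω ∈ B k
        · rw [Set.indicator_of_mem hω, Set.indicator_of_mem hω]
        · rw [Set.indicator_of_notMem hω, Set.indicator_of_notMem hω, mul_zero]
      have hRr : (fun ω => (α ω : EReal) * (B k).indicator ξ ω)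
          = fun ω => (B k).indicator (fun ω' => (α ω' : EReal) * ξ ω') ω := by
        funext ω
        by_cases hω : ω ∈ B k
        · rw [Set.indicator_of_mem hω, Set.indicator_of_mem hω]
        · rw [Set.indicator_of_notMem hω, Set.indicator_of_notMem hω, mul_zero]
      rw [hL, hRr] at h1
      exact h1
    have hCα0 : ∀ ω, α ω ≤ max Cα 0 := fun ω => le_max_of_le_left (hCα ω)
    -- conclude, using quasi-integrability
    rcases hqi with hPfin | hNfin
    · -- positive part of ξ is integrable
      have hprobe : ∀ k, ∫⁻ ω, (B k).indicator (fun ω' => ePos (ξ' ω')) ω ∂μ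
          ≤ ∫⁻ ω, (B k).indicator (fun ω' => ePos (ξ ω')) ω ∂μ :=
        fun k => probe_pos hG (hBG k) hξ'G (R k)
      have hPξ' : ∫⁻ ω, ePos (ξ' ω) ∂μ ≠ ⊤ := by
        apply ne_top_of_le_ne_top hPfin
        rw [lintegral_eq_tsum_partition hBm hBdisj hBcover (fun ω => ePos (ξ' ω)),
          lintegral_eq_tsum_partition hBm hBdisj hBcover (fun ω => ePos (ξ ω))]
        exact ENNReal.tsum_le_tsum hprobe
      apply EInt_eq_of_partition hBm hBdisj hBcover hEk
      refine Or.inr ⟨?_, ?_⟩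
      · exact ne_top_of_le_ne_top (ENNReal.mul_ne_top ENNReal.ofReal_ne_top hPξ')
          (lintegral_ePos_mul_le hα0 hCα0)
      · exact ne_top_of_le_ne_top (ENNReal.mul_ne_top ENNReal.ofReal_ne_top hPfin)
          (lintegral_ePos_mul_le hα0 hCα0)
    · -- negative part of ξ is integrable
      have hprobe : ∀ k, ∫⁻ ω, (B k).indicator (fun ω' => ePos (-ξ' ω')) ω ∂μ
          ≤ ∫⁻ ω, (B k).indicator (fun ω' => ePos (-ξ ω')) ω ∂μ :=
        fun k => probe_neg hG (hBG k) hξ'G (R k)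
      have hNξ' : ∫⁻ ω, ePos (-ξ' ω) ∂μ ≠ ⊤ := by
        apply ne_top_of_le_ne_top hNfin
        rw [lintegral_eq_tsum_partition hBm hBdisj hBcover (fun ω => ePos (-ξ' ω)),
          lintegral_eq_tsum_partition hBm hBdisj hBcover (fun ω => ePos (-ξ ω))]
        exact ENNReal.tsum_le_tsum hprobe
      apply EInt_eq_of_partition hBm hBdisj hBcover hEk
      refine Or.inl ⟨?_, ?_⟩
      · exact ne_top_of_le_ne_top (ENNReal.mul_ne_top ENNReal.ofReal_ne_top hNξ')
          (lintegral_ePos_neg_mul_le hα0 hCα0)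
      · exact ne_top_of_le_ne_top (ENNReal.mul_ne_top ENNReal.ofReal_ne_top hNfin)
          (lintegral_ePos_neg_mul_le hα0 hCα0)


/-- Theorem 2.6, monotone convergence: if `(h ν)` is a nondecreasing
sequence of L-bounded normal integrands with `G`-conditional expectations `(hhat ν)`,
then `sup_ν hhat ν` is a `G`-conditional expectation of `sup_ν h ν`. -/
theorem statement2 {Ω : Type*} {mΩ : MeasurableSpace Ω} (μ : Measure Ω)
    [IsProbabilityMeasure μ] (hcompl : μ.IsComplete)
    (G : MeasurableSpace Ω) (hG : G ≤ mΩ) (n : ℕ)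
    (h : ℕ → EuclideanSpace ℝ (Fin n) → Ω → EReal)
    (hNI : ∀ ν, IsNormalIntegrand mΩ (h ν))
    (hLB : ∀ ν, LBounded μ (h ν))
    (hmono : ∀ ν x ω, h ν x ω ≤ h (ν + 1) x ω)
    (hhat : ℕ → EuclideanSpace ℝ (Fin n) → Ω → EReal)
    (hce : ∀ ν, IsCondNI μ G (h ν) (hhat ν)) :
    IsCondNI μ G (fun x ω => ⨆ ν, h ν x ω) (fun x ω => ⨆ ν, hhat ν x ω) := by
  exact statement2_main μ G hG n h hNI hLB hmono hhat hce

end PaperDP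
end
end

section
/- N^⊥ = { v ∈ L¹(Ω,F,P;ℝⁿ) : E[v_t | F_t] = 0 a.s. for every t = 0,…,T }, where v = (v₀,…,v_T) with v_t taking values in ℝ^{n_t}. -/
open MeasureTheory ENNReal
open scoped RealInnerProductSpace

noncomputable section

namespace PaperDP

variable {Ω : Type*}

/-! ### Multistage setting -/

/-- The space `ℝⁿ = ℝ^{n₀} × ⋯ × ℝ^{n_T}` of deterministic strategies. -/
abbrev Strat (T : ℕ) (nn : ℕ → ℕ) := (t : Fin (T + 1)) → EuclideanSpace ℝ (Fin (nn t.1))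

/-- The scalar product `x · v = Σ_t x_t · v_t` on `Strat T nn`. -/
def sdot {T : ℕ} {nn : ℕ → ℕ} (x v : Strat T nn) : ℝ :=
  ∑ t : Fin (T + 1), ⟪x t, v t⟫

/-- An adapted process: `x_t` is `F_t`-measurable for every `t`. -/
def AdaptedProc (T : ℕ) (nn : ℕ → ℕ)
    (𝓕 : ℕ → MeasurableSpace Ω) (x : Ω → Strat T nn) : Prop :=
  ∀ t : Fin (T + 1), Measurable[𝓕 t.1] fun ω => x ω t

/-- `v ∈ N^⊥`: `v` is integrable and `E[x·v] = 0` for every bounded adapted `x`. -/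
def InNperp {mΩ : MeasurableSpace Ω} (μ : Measure Ω) (T : ℕ) (nn : ℕ → ℕ)
    (𝓕 : ℕ → MeasurableSpace Ω) (v : Ω → Strat T nn) : Prop :=
  Integrable v μ ∧
  ∀ x : Ω → Strat T nn, AdaptedProc T nn 𝓕 x → (∃ C, ∀ ω, ‖x ω‖ ≤ C) →
    ∫ ω, sdot (x ω) (v ω) ∂μ = 0

/-- `(H t)_{t ≤ T}` solves the Bellman equations (BE) for `h`:  each `H t` depends only on
the coordinates `x₀,…,x_t`; `H T` is an `F_T`-conditional expectation of `h`; and there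
are normal integrands `Ht t` with `Ht t = inf over `x_{t+1}` of `H (t+1)` and `H t` an
`F_t`-conditional expectation of `Ht t`. -/
def IsBellman {mΩ : MeasurableSpace Ω} (μ : Measure Ω) (T : ℕ) (nn : ℕ → ℕ)
    (𝓕 : ℕ → MeasurableSpace Ω) (h : Strat T nn → Ω → EReal)
    (H : ℕ → Strat T nn → Ω → EReal) : Prop :=
  (∀ t : ℕ, t ≤ T → ∀ x y : Strat T nn, ∀ ω : Ω,
      (∀ s : Fin (T + 1), s.1 ≤ t → x s = y s) → H t x ω = H t y ω) ∧
  IsCondNI μ (𝓕 T) h (H T) ∧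
  ∃ Ht : ℕ → Strat T nn → Ω → EReal, ∀ t : ℕ, (ht : t < T) →
    IsNormalIntegrand mΩ (Ht t) ∧
    (∀ (x : Strat T nn) (ω : Ω),
      Ht t x ω = ⨅ ξ : EuclideanSpace ℝ (Fin (nn (t + 1))),
        H (t + 1) (Function.update x ⟨t + 1, by omega⟩ ξ) ω) ∧
    IsCondNI μ (𝓕 t) (Ht t) (H t)

/-- The set `N_t(ω)` associated with a Bellman solution. -/
def Nset {T : ℕ} {nn : ℕ → ℕ} (H : ℕ → Strat T nn → Ω → EReal) (t : Fin (T + 1))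
    (ω : Ω) : Set (EuclideanSpace ℝ (Fin (nn t.1))) :=
  {ξ | recessionFn (fun z => H t.1 z ω) (Function.update 0 t ξ) ≤ 0}

/-- The optimum value of the stochastic optimization problem (SP). -/
def SPval {mΩ : MeasurableSpace Ω} (μ : Measure Ω) (T : ℕ) (nn : ℕ → ℕ)
    (𝓕 : ℕ → MeasurableSpace Ω) (h : Strat T nn → Ω → EReal) : EReal :=
  ⨅ x : {x : Ω → Strat T nn // AdaptedProc T nn 𝓕 x}, EInt μ (fun ω => h (x.1 ω) ω)

/-- `xbar` solves (SP): it is adapted and minimizes the objective over adapted processes. -/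
def Solves {mΩ : MeasurableSpace Ω} (μ : Measure Ω) (T : ℕ) (nn : ℕ → ℕ)
    (𝓕 : ℕ → MeasurableSpace Ω) (h : Strat T nn → Ω → EReal) (xbar : Ω → Strat T nn) : Prop :=
  AdaptedProc T nn 𝓕 xbar ∧
  ∀ x : Ω → Strat T nn, AdaptedProc T nn 𝓕 x →
    EInt μ (fun ω => h (xbar ω) ω) ≤ EInt μ (fun ω => h (x ω) ω)



/-! ### Auxiliary lemmas -/

lemma condexp_zero_iff' {Ω : Type*} {m : MeasurableSpace Ω} {mΩ : MeasurableSpace Ω}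
    {μ : Measure Ω} [IsProbabilityMeasure μ] (hm : m ≤ mΩ)
    {E : Type*} [NormedAddCommGroup E] [NormedSpace ℝ E] [CompleteSpace E]
    {f : Ω → E} (hf : Integrable f μ) :
    μ[f|m] =ᵐ[μ] 0 ↔ ∀ s, MeasurableSet[m] s → ∫ ω in s, f ω ∂μ = 0 := by
  haveI : SigmaFinite (μ.trim hm) := inferInstance
  constructor
  · intro h s hs
    rw [← setIntegral_condExp hm hf hs]
    calc ∫ ω in s, (μ[f|m]) ω ∂μ = ∫ _ω in s, (0 : E) ∂μ :=
          integral_congr_ae (ae_restrict_of_ae h)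
      _ = 0 := by simp
  · intro h
    refine (ae_eq_condExp_of_forall_setIntegral_eq hm hf
      (fun s _ _ => integrableOn_zero) (fun s hs _ => by simp [h s hs]) ?_).symm
    exact StronglyMeasurable.aestronglyMeasurable stronglyMeasurable_const

lemma coord_setIntegral {Ω : Type*} {mΩ : MeasurableSpace Ω} {μ : Measure Ω}
    {n : ℕ} {f : Ω → EuclideanSpace ℝ (Fin n)} (hf : Integrable f μ) (s : Set Ω)
    (i : Fin n) : (∫ ω in s, f ω ∂μ) i = ∫ ω in s, f ω i ∂μ :=
  ((EuclideanSpace.proj (𝕜 := ℝ) i).integral_comp_comm hf.integrableOn).symm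

lemma integral_mul_eq_zero' {Ω : Type*} {m : MeasurableSpace Ω} {mΩ : MeasurableSpace Ω}
    {μ : Measure Ω} [IsProbabilityMeasure μ] (hm : m ≤ mΩ)
    {f g : Ω → ℝ} (hf : StronglyMeasurable[m] f) (hfg : Integrable (fun ω => f ω * g ω) μ)
    (hg : Integrable g μ) (h0 : μ[g|m] =ᵐ[μ] 0) :
    ∫ ω, f ω * g ω ∂μ = 0 := by
  haveI : SigmaFinite (μ.trim hm) := inferInstance
  have h1 : μ[f * g|m] =ᵐ[μ] f * μ[g|m] :=
    condExp_mul_of_stronglyMeasurable_left hf hfg hg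
  have h2 : μ[f * g|m] =ᵐ[μ] 0 := by
    refine h1.trans ?_
    filter_upwards [h0] with ω hω
    simp [Pi.mul_apply, hω]
  calc ∫ ω, f ω * g ω ∂μ = ∫ ω, (f * g) ω ∂μ := rfl
    _ = ∫ ω, (μ[f * g|m]) ω ∂μ := (integral_condExp hm).symm
    _ = ∫ _ω, (0 : ℝ) ∂μ := integral_congr_ae h2
    _ = 0 := by simp

lemma abs_coord_le_norm {n : ℕ} (a : EuclideanSpace ℝ (Fin n)) (i : Fin n) :
    |a i| ≤ ‖a‖ := by
  have h := abs_real_inner_le_norm (EuclideanSpace.single i (1 : ℝ)) a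
  simpa [EuclideanSpace.inner_single_left, EuclideanSpace.norm_single] using h

/-- Lemma 4.1: `N^⊥` consists exactly of the integrable `v` with
`E[v_t | F_t] = 0` a.s. for every `t`. -/
theorem statement10 {Ω : Type*} {mΩ : MeasurableSpace Ω} (μ : Measure Ω)
    [IsProbabilityMeasure μ] (T : ℕ) (nn : ℕ → ℕ) (𝓕 : ℕ → MeasurableSpace Ω)
    (hle : ∀ t, 𝓕 t ≤ mΩ) (hmono : ∀ s t, s ≤ t → 𝓕 s ≤ 𝓕 t) :
    {v : Ω → Strat T nn | InNperp μ T nn 𝓕 v} =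
      {v : Ω → Strat T nn | Integrable v μ ∧
        ∀ t : Fin (T + 1), μ[fun ω => v ω t|𝓕 t.1] =ᵐ[μ] 0} := by
  ext v
  simp only [Set.mem_setOf_eq]
  have hproj : ∀ (w : Ω → Strat T nn), Integrable w μ → ∀ t : Fin (T + 1),
      Integrable (fun ω => w ω t) μ := fun w hw t =>
    (ContinuousLinearMap.proj (R := ℝ)
      (φ := fun t : Fin (T + 1) => EuclideanSpace ℝ (Fin (nn t.1))) t).integrable_comp hw
  constructor
  · rintro ⟨hv, hperp⟩
    refine ⟨hv, fun t => ?_⟩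
    have hvt := hproj v hv t
    refine (condexp_zero_iff' (hle t.1) hvt).mpr fun s hs => ?_
    have hsΩ : MeasurableSet s := hle t.1 s hs
    ext i
    rw [coord_setIntegral hvt s i]
    set e : EuclideanSpace ℝ (Fin (nn t.1)) := EuclideanSpace.single i 1 with he
    set x : Ω → Strat T nn := fun ω =>
      Function.update (0 : Strat T nn) t (s.indicator (fun _ => (1 : ℝ)) ω • e) with hxdef
    have hxa : AdaptedProc T nn 𝓕 x := by
      intro t'
      by_cases h' : t' = t
      · subst h'
        have hfun : (fun ω => x ω t') = fun ω => s.indicator (fun _ => (1 : ℝ)) ω • e := by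
          funext ω; simp [hxdef]
        rw [hfun]
        exact (measurable_const.indicator hs).smul_const e
      · have hfun : (fun ω => x ω t') = fun _ => 0 := by
          funext ω; simp [hxdef, Function.update_of_ne h']
        rw [hfun]
        exact measurable_const
    have hxb : ∃ C, ∀ ω, ‖x ω‖ ≤ C := by
      refine ⟨1, fun ω => ?_⟩
      refine (pi_norm_le_iff_of_nonneg zero_le_one).mpr fun t' => ?_
      by_cases h' : t' = t
      · subst h'
        simp only [hxdef, Function.update_self]
        rw [norm_smul]
        have h1 : ‖e‖ = 1 := by simp [he, EuclideanSpace.norm_single]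
        by_cases hω : ω ∈ s
        · simp [Set.indicator_of_mem hω, h1]
        · simp [Set.indicator_of_notMem hω]
      · simp [hxdef, Function.update_of_ne h']
    have key := hperp x hxa hxb
    have hsdot : ∀ ω, sdot (x ω) (v ω) = s.indicator (fun ω' => v ω' t i) ω := by
      intro ω
      unfold sdot
      rw [Finset.sum_eq_single t]
      · by_cases hω : ω ∈ s
        · simp [hxdef, Set.indicator_of_mem hω, real_inner_smul_left, he,
            EuclideanSpace.inner_single_left]
        · simp [hxdef, Set.indicator_of_notMem hω]
      · intro b _ hb
        simp [hxdef, Function.update_of_ne hb]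
      · simp
    have : ∫ ω in s, v ω t i ∂μ = 0 := by
      calc ∫ ω in s, v ω t i ∂μ
          = ∫ ω, s.indicator (fun ω' => v ω' t i) ω ∂μ := (integral_indicator hsΩ).symm
        _ = ∫ ω, sdot (x ω) (v ω) ∂μ := integral_congr_ae (Filter.Eventually.of_forall
            fun ω => (hsdot ω).symm)
        _ = 0 := key
    simpa using this
  · rintro ⟨hv, hce⟩
    refine ⟨hv, ?_⟩
    rintro x hx ⟨C, hC⟩
    have hvt := hproj v hv
    have hgi : ∀ (t : Fin (T + 1)) (i : Fin (nn t.1)),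
        Integrable (fun ω => v ω t i) μ := fun t i =>
      (EuclideanSpace.proj (𝕜 := ℝ) i).integrable_comp (hvt t)
    have hg0 : ∀ (t : Fin (T + 1)) (i : Fin (nn t.1)),
        μ[fun ω => v ω t i|𝓕 t.1] =ᵐ[μ] 0 := by
      intro t i
      refine (condexp_zero_iff' (hle t.1) (hgi t i)).mpr fun s hs => ?_
      have h0 := (condexp_zero_iff' (hle t.1) (hvt t)).mp (hce t) s hs
      rw [← coord_setIntegral (hvt t) s i, h0]
      simp
    have hfmeas : ∀ (t : Fin (T + 1)) (i : Fin (nn t.1)),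
        StronglyMeasurable[𝓕 t.1] (fun ω => x ω t i) := fun t i =>
      (((EuclideanSpace.proj (𝕜 := ℝ) i).continuous.measurable).comp (hx t)).stronglyMeasurable
    have hfbdd : ∀ (t : Fin (T + 1)) (i : Fin (nn t.1)) (ω : Ω), |x ω t i| ≤ C := by
      intro t i ω
      calc |x ω t i| ≤ ‖x ω t‖ := abs_coord_le_norm _ i
        _ ≤ ‖x ω‖ := norm_le_pi_norm (x ω) t
        _ ≤ C := hC ω
    have hterm : ∀ (t : Fin (T + 1)) (i : Fin (nn t.1)),
        Integrable (fun ω => x ω t i * v ω t i) μ := by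
      intro t i
      refine Integrable.bdd_mul (hgi t i) ?_ (Filter.Eventually.of_forall fun ω => by
        simpa using hfbdd t i ω)
      exact (((hfmeas t i).measurable).mono (hle t.1) le_rfl).aestronglyMeasurable
    have hzero : ∀ (t : Fin (T + 1)) (i : Fin (nn t.1)),
        ∫ ω, x ω t i * v ω t i ∂μ = 0 := fun t i =>
      integral_mul_eq_zero' (hle t.1) (hfmeas t i) (hterm t i) (hgi t i) (hg0 t i)
    have expand : ∀ ω, sdot (x ω) (v ω) = ∑ t : Fin (T + 1), ∑ i, x ω t i * v ω t i := by
      intro ω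
      unfold sdot
      refine Finset.sum_congr rfl fun t _ => ?_
      simp [PiLp.inner_apply, RCLike.inner_apply, mul_comm]
    calc ∫ ω, sdot (x ω) (v ω) ∂μ
        = ∫ ω, ∑ t : Fin (T + 1), ∑ i, x ω t i * v ω t i ∂μ :=
          integral_congr_ae (Filter.Eventually.of_forall expand)
      _ = ∑ t : Fin (T + 1), ∑ i, ∫ ω, x ω t i * v ω t i ∂μ := by
          rw [integral_finset_sum _ fun t _ =>
            integrable_finset_sum _ fun i _ => hterm t i]
          exact Finset.sum_congr rfl fun t _ => integral_finset_sum _ fun i _ => hterm t i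
      _ = 0 := Finset.sum_eq_zero fun t _ => Finset.sum_eq_zero fun i _ => hzero t i

end PaperDP
end
end

section
/- Let x ∈ N and v ∈ N^⊥. If the positive part of x·v := Σ_{t=0}^T x_t·v_t is integrable, then x·v is integrable and E[x·v] = 0. -/
open MeasureTheory ENNReal
open scoped RealInnerProductSpace

noncomputable section

namespace PaperDP

variable {Ω : Type*}

section Statement11Aux

open Filter Topology

variable {mΩ : MeasurableSpace Ω}

lemma helper_int {μ : Measure Ω} (f : Ω → ℝ) (A : ℕ → Set Ω) (M : ℝ)
    (hf : AEStronglyMeasurable f μ) (hf0 : ∀ ω, 0 ≤ f ω)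
    (hA : ∀ k, MeasurableSet (A k)) (hAmono : Monotone A)
    (hcov : ∀ ω, ∃ k, ω ∈ A k)
    (hint : ∀ k, Integrable ((A k).indicator f) μ)
    (hbd : ∀ k, ∫ ω, (A k).indicator f ω ∂μ ≤ M) :
    Integrable f μ := by
  refine ⟨hf, ?_⟩
  rw [hasFiniteIntegral_iff_ofReal (Filter.Eventually.of_forall hf0)]
  have hkey : (∫⁻ ω, ENNReal.ofReal (f ω) ∂μ)
      = ∫⁻ ω, ⨆ k, (A k).indicator (fun ω => ENNReal.ofReal (f ω)) ω ∂μ := by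
    refine lintegral_congr fun ω => ?_
    obtain ⟨k, hk⟩ := hcov ω
    refine le_antisymm (le_iSup_of_le k (by simp [Set.indicator_of_mem hk])) ?_
    exact iSup_le fun j => Set.indicator_le_self _ _ ω
  rw [hkey]
  rw [lintegral_iSup' (fun k => ((hf.aemeasurable.ennreal_ofReal).indicator (hA k)))
    (Filter.Eventually.of_forall fun ω => fun i j hij =>
      Set.indicator_le_indicator_of_subset (hAmono hij) (fun _ => zero_le) ω)]
  refine lt_of_le_of_lt (iSup_le fun k => ?_) (ofReal_lt_top (r := M))
  have h1 : ∀ ω, (A k).indicator (fun ω => ENNReal.ofReal (f ω)) ω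
      = ENNReal.ofReal ((A k).indicator f ω) := by
    intro ω
    by_cases h : ω ∈ A k <;> simp [h]
  calc ∫⁻ ω, (A k).indicator (fun ω => ENNReal.ofReal (f ω)) ω ∂μ
      = ∫⁻ ω, ENNReal.ofReal ((A k).indicator f ω) ∂μ := lintegral_congr h1
    _ = ENNReal.ofReal (∫ ω, (A k).indicator f ω ∂μ) := by
        rw [ofReal_integral_eq_lintegral_ofReal (hint k)
          (Filter.Eventually.of_forall fun ω => Set.indicator_nonneg (fun ω _ => hf0 ω) ω)]
    _ ≤ ENNReal.ofReal M := ofReal_le_ofReal (hbd k)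

lemma helper_pull {μ : Measure Ω} [IsFiniteMeasure μ] (G : MeasurableSpace Ω) (hG : G ≤ mΩ)
    (β V : Ω → ℝ) (hβ : Measurable[G] β) (c : ℝ) (hc : ∀ ω, |β ω| ≤ c)
    (hV : Integrable V μ) :
    ∫ ω, β ω * V ω ∂μ = ∫ ω, β ω * (μ[V|G]) ω ∂μ := by
  have h1 : μ[(fun ω => β ω * V ω)|G] =ᵐ[μ] fun ω => β ω * (μ[V|G]) ω :=
    condExp_stronglyMeasurable_mul_of_bound hG hβ.stronglyMeasurable hV c
      (Filter.Eventually.of_forall fun ω => by simpa using hc ω)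
  rw [← integral_condExp hG (f := fun ω => β ω * V ω)]
  exact integral_congr_ae h1


lemma aux_key {μ : Measure Ω} [IsProbabilityMeasure μ] (T : ℕ) (nn : ℕ → ℕ)
    (𝓕 : ℕ → MeasurableSpace Ω) (hle : ∀ t, 𝓕 t ≤ mΩ)
    (hmono : ∀ s t, s ≤ t → 𝓕 s ≤ 𝓕 t) (m : ℕ) :
    ∀ (X V : (t : Fin (T+1)) → Fin (nn t.1) → Ω → ℝ),
    (∀ t i, Measurable[𝓕 t.1] (X t i)) →
    (∀ t i, Integrable (V t i) μ) →
    (∀ (t : Fin (T+1)) (i : Fin (nn t.1)) (α : Ω → ℝ), Measurable[𝓕 t.1] α →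
      (∃ C, ∀ ω, |α ω| ≤ C) → ∫ ω, α ω * V t i ω ∂μ = 0) →
    (∀ (t : Fin (T+1)), m ≤ t.1 → ∀ i, V t i = 0) →
    Integrable (fun ω => max (∑ t, ∑ i, X t i ω * V t i ω) 0) μ →
    Integrable (fun ω => ∑ t, ∑ i, X t i ω * V t i ω) μ ∧
      ∫ ω, ∑ t, ∑ i, X t i ω * V t i ω ∂μ = 0 := by
  induction m with
  | zero =>
    intro X V hX hV hperp hvan hpos
    have hz : (fun ω => ∑ t, ∑ i, X t i ω * V t i ω) = fun _ => (0:ℝ) := by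
      funext ω
      refine Finset.sum_eq_zero fun t _ => Finset.sum_eq_zero fun i _ => ?_
      rw [hvan t (Nat.zero_le _) i]; simp
    rw [hz]
    exact ⟨integrable_const 0, by simp⟩
  | succ m ih =>
    intro X V hX hV hperp hvan hpos
    by_cases hmT : T + 1 ≤ m
    · exact ih X V hX hV hperp
        (fun t ht i => absurd ht (by have := t.2; omega)) hpos
    push_neg at hmT
    have hGle : 𝓕 m ≤ mΩ := hle m
    -- truncated `X`
    set Y : (t : Fin (T+1)) → Fin (nn t.1) → Ω → ℝ :=
      fun t i => if (t : ℕ) ≤ m then X t i else 0 with hYdef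
    have hY : ∀ t i, Measurable[𝓕 t.1] (Y t i) := by
      intro t i
      simp only [hYdef]
      by_cases h : (t : ℕ) ≤ m
      · rw [if_pos h]; exact hX t i
      · rw [if_neg h]; exact measurable_const
    have hYG : ∀ t i, Measurable[𝓕 m] (Y t i) := by
      intro t i
      simp only [hYdef]
      by_cases h : (t : ℕ) ≤ m
      · rw [if_pos h]; exact (hX t i).mono (hmono _ _ h) le_rfl
      · rw [if_neg h]; exact measurable_const
    have hYm : ∀ t i, Measurable (Y t i) := fun t i => (hYG t i).mono hGle le_rfl
    set S : Ω → ℝ := fun ω => ∑ t, ∑ i, Y t i ω * V t i ω with hSdef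
    have hSXω : ∀ ω, (∑ t, ∑ i, X t i ω * V t i ω) = S ω := by
      intro ω
      refine Finset.sum_congr rfl fun t _ => Finset.sum_congr rfl fun i _ => ?_
      simp only [hYdef]
      by_cases h : (t : ℕ) ≤ m
      · rw [if_pos h]
      · have hv0 : V t i = 0 := hvan t (by omega) i
        rw [if_neg h, hv0]; simp
    simp only [hSXω] at hpos ⊢
    -- the new dual variable
    set V' : (t : Fin (T+1)) → Fin (nn t.1) → Ω → ℝ :=
      fun t i => if (t : ℕ) < m then μ[V t i | 𝓕 m] else 0 with hV'def
    have hV'pos : ∀ (t : Fin (T+1)) (i : Fin (nn t.1)), ((t:ℕ) < m) →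
        V' t i = μ[V t i | 𝓕 m] := by
      intro t i h; simp only [hV'def]; rw [if_pos h]
    have hV'neg : ∀ (t : Fin (T+1)) (i : Fin (nn t.1)), ¬((t:ℕ) < m) →
        V' t i = 0 := by
      intro t i h; simp only [hV'def]; rw [if_neg h]
    have hV'int : ∀ t i, Integrable (V' t i) μ := by
      intro t i
      by_cases h : (t : ℕ) < m
      · rw [hV'pos t i h]; exact integrable_condExp
      · rw [hV'neg t i h]; exact integrable_zero _ _ _
    set S' : Ω → ℝ := fun ω => ∑ t, ∑ i, Y t i ω * V' t i ω with hS'def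
    -- truncation sets
    set A : ℕ → Set Ω := fun k =>
      ⋂ (t : Fin (T+1)) (i : Fin (nn t.1)), {ω | |Y t i ω| ≤ (k:ℝ)} with hAdef
    have hmemA : ∀ k ω, ω ∈ A k ↔ ∀ t i, |Y t i ω| ≤ (k:ℝ) := by
      intro k ω; simp only [hAdef, Set.mem_iInter, Set.mem_setOf_eq]
    have hAG : ∀ k, MeasurableSet[𝓕 m] (A k) := by
      intro k
      refine MeasurableSet.iInter fun t => MeasurableSet.iInter fun i => ?_
      exact (hYG t i) ((isClosed_le continuous_abs continuous_const).measurableSet)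
    have hAm : ∀ k, MeasurableSet (A k) := fun k => hGle _ (hAG k)
    have hAmono : Monotone A := by
      intro j l hjl ω hω
      exact (hmemA l ω).2 fun t i =>
        le_trans ((hmemA j ω).1 hω t i) (Nat.cast_le.2 hjl)
    have hAcov : ∀ ω, ∃ k, ω ∈ A k := by
      intro ω
      obtain ⟨k, hk⟩ := exists_nat_ge (∑ t : Fin (T+1), ∑ i, |Y t i ω|)
      refine ⟨k, (hmemA k ω).2 fun t i => ?_⟩
      have h1 : |Y t i ω| ≤ ∑ j, |Y t j ω| :=
        Finset.single_le_sum (f := fun j => |Y t j ω|)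
          (fun j _ => abs_nonneg _) (Finset.mem_univ i)
      have h2 : (∑ j, |Y t j ω|) ≤ ∑ s : Fin (T+1), ∑ j, |Y s j ω| :=
        Finset.single_le_sum (f := fun s : Fin (T+1) => ∑ j, |Y s j ω|)
          (fun s _ => Finset.sum_nonneg fun j _ => abs_nonneg _) (Finset.mem_univ t)
      exact le_trans (le_trans h1 h2) hk
    -- regrouping of indicators
    have hregroup : ∀ (W : (t : Fin (T+1)) → Fin (nn t.1) → Ω → ℝ) (k : ℕ) (ω : Ω),
        (A k).indicator (fun ω => ∑ t, ∑ i, Y t i ω * W t i ω) ω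
          = ∑ t, ∑ i, (A k).indicator (Y t i) ω * W t i ω := by
      intro W k ω
      by_cases h : ω ∈ A k
      · simp only [Set.indicator_of_mem h]
      · simp only [Set.indicator_of_notMem h]
        exact (Finset.sum_eq_zero fun t _ => Finset.sum_eq_zero fun i _ => by simp).symm
    have hYbd : ∀ k t i ω, |(A k).indicator (Y t i) ω| ≤ (k:ℝ) := by
      intro k t i ω
      by_cases h : ω ∈ A k
      · rw [Set.indicator_of_mem h]; exact (hmemA k ω).1 h t i
      · rw [Set.indicator_of_notMem h]; simp
    have hintgen : ∀ (W : (t : Fin (T+1)) → Fin (nn t.1) → Ω → ℝ),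
        (∀ t i, Integrable (W t i) μ) → ∀ k,
        Integrable (fun ω => ∑ t, ∑ i, (A k).indicator (Y t i) ω * W t i ω) μ := by
      intro W hW k
      refine integrable_finset_sum _ fun t _ => integrable_finset_sum _ fun i _ => ?_
      exact (hW t i).bdd_mul
        ((((hYG t i).indicator (hAG k)).mono hGle le_rfl).aestronglyMeasurable)
        (Filter.Eventually.of_forall fun ω => by
          rw [Real.norm_eq_abs]; exact hYbd k t i ω)
    have hindS : ∀ k, Integrable ((A k).indicator S) μ := by
      intro k
      refine (hintgen V hV k).congr ?_
      exact Filter.Eventually.of_forall fun ω => (hregroup V k ω).symm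
    have hindS' : ∀ k, Integrable ((A k).indicator S') μ := by
      intro k
      refine (hintgen V' hV'int k).congr ?_
      exact Filter.Eventually.of_forall fun ω => (hregroup V' k ω).symm
    -- strong measurability
    have hS'measG : StronglyMeasurable[𝓕 m] S' := by
      refine Finset.stronglyMeasurable_fun_sum _ fun t _ =>
        Finset.stronglyMeasurable_fun_sum _ fun i _ => ?_
      refine StronglyMeasurable.mul (hYG t i).stronglyMeasurable ?_
      by_cases h : (t : ℕ) < m
      · rw [hV'pos t i h]; exact stronglyMeasurable_condExp
      · rw [hV'neg t i h]; exact stronglyMeasurable_const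
    have hSaesm : AEStronglyMeasurable S μ := by
      refine Finset.aestronglyMeasurable_fun_sum _ fun t _ =>
        Finset.aestronglyMeasurable_fun_sum _ fun i _ => ?_
      exact ((hYm t i).aestronglyMeasurable).mul (hV t i).aestronglyMeasurable
    have hS'aesm : AEStronglyMeasurable S' μ :=
      ((hS'measG.mono hGle)).aestronglyMeasurable
    -- the set-integral identity
    have hsetint : ∀ (k : ℕ) (s : Set Ω), MeasurableSet[𝓕 m] s →
        ∫ ω in s, (A k).indicator S' ω ∂μ = ∫ ω in s, (A k).indicator S ω ∂μ := by
      intro k s hs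
      have hsm : MeasurableSet s := hGle s hs
      have hptw : ∀ (W : (t : Fin (T+1)) → Fin (nn t.1) → Ω → ℝ) (ω : Ω),
          s.indicator ((A k).indicator (fun ω => ∑ t, ∑ i, Y t i ω * W t i ω)) ω
            = ∑ t, ∑ i, (s ∩ A k).indicator (Y t i) ω * W t i ω := by
        intro W ω
        by_cases h1 : ω ∈ s
        · by_cases h2 : ω ∈ A k
          · rw [Set.indicator_of_mem h1, Set.indicator_of_mem h2]
            exact Finset.sum_congr rfl fun t _ => Finset.sum_congr rfl fun i _ => by
              rw [Set.indicator_of_mem (Set.mem_inter h1 h2)]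
          · rw [Set.indicator_of_mem h1, Set.indicator_of_notMem h2]
            refine (Finset.sum_eq_zero fun t _ => Finset.sum_eq_zero fun i _ => ?_).symm
            rw [Set.indicator_of_notMem (fun hc => h2 hc.2)]; ring
        · rw [Set.indicator_of_notMem h1]
          refine (Finset.sum_eq_zero fun t _ => Finset.sum_eq_zero fun i _ => ?_).symm
          rw [Set.indicator_of_notMem (fun hc => h1 hc.1)]; ring
      have hβG : ∀ t i, Measurable[𝓕 m] ((s ∩ A k).indicator (Y t i)) :=
        fun t i => (hYG t i).indicator (hs.inter (hAG k))
      have hβbd : ∀ t i ω, |(s ∩ A k).indicator (Y t i) ω| ≤ (k:ℝ) := by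
        intro t i ω
        by_cases h : ω ∈ s ∩ A k
        · rw [Set.indicator_of_mem h]; exact (hmemA k ω).1 h.2 t i
        · rw [Set.indicator_of_notMem h]; simp
      have hβint : ∀ (W : (t : Fin (T+1)) → Fin (nn t.1) → Ω → ℝ),
          (∀ t i, Integrable (W t i) μ) → ∀ t i,
          Integrable (fun ω => (s ∩ A k).indicator (Y t i) ω * W t i ω) μ := by
        intro W hW t i
        exact (hW t i).bdd_mul (((hβG t i).mono hGle le_rfl).aestronglyMeasurable)
          (Filter.Eventually.of_forall fun ω => by
            rw [Real.norm_eq_abs]; exact hβbd t i ω)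
      have hterm : ∀ t i,
          ∫ ω, (s ∩ A k).indicator (Y t i) ω * V' t i ω ∂μ
            = ∫ ω, (s ∩ A k).indicator (Y t i) ω * V t i ω ∂μ := by
        intro t i
        rcases lt_trichotomy ((t : ℕ)) m with htm | htm | htm
        · rw [hV'pos t i htm]
          exact (helper_pull (𝓕 m) hGle _ (V t i) (hβG t i) k (hβbd t i) (hV t i)).symm
        · have hz : ∫ ω, (s ∩ A k).indicator (Y t i) ω * V t i ω ∂μ = 0 := by
            refine hperp t i _ ?_ ⟨k, hβbd t i⟩
            have he : 𝓕 ((t : ℕ)) = 𝓕 m := by rw [htm]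
            rw [he]; exact hβG t i
          rw [hV'neg t i (by omega), hz]
          simp
        · have hv0 : V t i = 0 := hvan t htm i
          rw [hv0, hV'neg t i (by omega)]
      calc ∫ ω in s, (A k).indicator S' ω ∂μ
          = ∫ ω, s.indicator ((A k).indicator S') ω ∂μ := (integral_indicator hsm).symm
        _ = ∫ ω, ∑ t, ∑ i, (s ∩ A k).indicator (Y t i) ω * V' t i ω ∂μ :=
            integral_congr_ae (Filter.Eventually.of_forall fun ω => hptw V' ω)
        _ = ∑ t, ∑ i, ∫ ω, (s ∩ A k).indicator (Y t i) ω * V' t i ω ∂μ := by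
            rw [integral_finset_sum _ fun t _ =>
              integrable_finset_sum _ fun i _ => hβint V' hV'int t i]
            exact Finset.sum_congr rfl fun t _ =>
              integral_finset_sum _ fun i _ => hβint V' hV'int t i
        _ = ∑ t, ∑ i, ∫ ω, (s ∩ A k).indicator (Y t i) ω * V t i ω ∂μ :=
            Finset.sum_congr rfl fun t _ => Finset.sum_congr rfl fun i _ => hterm t i
        _ = ∫ ω, ∑ t, ∑ i, (s ∩ A k).indicator (Y t i) ω * V t i ω ∂μ := by
            rw [integral_finset_sum _ fun t _ =>
              integrable_finset_sum _ fun i _ => hβint V hV t i]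
            exact (Finset.sum_congr rfl fun t _ =>
              (integral_finset_sum _ fun i _ => hβint V hV t i).symm)
        _ = ∫ ω, s.indicator ((A k).indicator S) ω ∂μ :=
            integral_congr_ae (Filter.Eventually.of_forall fun ω => (hptw V ω).symm)
        _ = ∫ ω in s, (A k).indicator S ω ∂μ := integral_indicator hsm
    -- the key conditional-expectation identity
    have hstar : ∀ k, (A k).indicator S' =ᵐ[μ] μ[(A k).indicator S | 𝓕 m] := by
      intro k
      refine ae_eq_condExp_of_forall_setIntegral_eq hGle (hindS k)
        (fun s _ _ => (hindS' k).integrableOn) (fun s hs _ => hsetint k s hs) ?_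
      exact (hS'measG.indicator (hAG k)).aestronglyMeasurable
    -- positive parts interchange
    have hmax_ind : ∀ (g : Ω → ℝ) (k : ℕ),
        (A k).indicator (fun ω => max (g ω) 0) = fun ω => max ((A k).indicator g ω) 0 := by
      intro g k; funext ω
      by_cases h : ω ∈ A k
      · simp [Set.indicator_of_mem h]
      · simp [Set.indicator_of_notMem h]
    have hindSpos_le : ∀ k ω, max ((A k).indicator S ω) 0 ≤ max (S ω) 0 := by
      intro k ω
      by_cases h : ω ∈ A k
      · rw [Set.indicator_of_mem h]
      · rw [Set.indicator_of_notMem h]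
        simp only [max_self]
        exact le_max_right _ _
    have hbd1 : ∀ k, ∫ ω, (A k).indicator (fun ω => max (S' ω) 0) ω ∂μ
        ≤ ∫ ω, max (S ω) 0 ∂μ := by
      intro k
      rw [hmax_ind S' k]
      have hupos : Integrable (fun ω => max ((A k).indicator S ω) 0) μ := (hindS k).pos_part
      have hm1 : μ[(A k).indicator S | 𝓕 m]
          ≤ᵐ[μ] μ[(fun ω => max ((A k).indicator S ω) 0) | 𝓕 m] :=
        condExp_mono (hindS k) hupos (Filter.Eventually.of_forall fun ω => le_max_left _ _)
      have hm2 : (0 : Ω → ℝ) ≤ᵐ[μ] μ[(fun ω => max ((A k).indicator S ω) 0) | 𝓕 m] :=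
        condExp_nonneg (Filter.Eventually.of_forall fun ω => le_max_right _ _)
      have hle2 : (fun ω => max ((A k).indicator S' ω) 0)
          ≤ᵐ[μ] μ[(fun ω => max ((A k).indicator S ω) 0) | 𝓕 m] := by
        filter_upwards [hstar k, hm1, hm2] with ω h1 h2 h3
        rw [h1]
        exact max_le h2 h3
      calc ∫ ω, max ((A k).indicator S' ω) 0 ∂μ
          ≤ ∫ ω, (μ[(fun ω => max ((A k).indicator S ω) 0) | 𝓕 m]) ω ∂μ :=
            integral_mono_ae ((hindS' k).pos_part) integrable_condExp hle2
        _ = ∫ ω, max ((A k).indicator S ω) 0 ∂μ := integral_condExp hGle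
        _ ≤ ∫ ω, max (S ω) 0 ∂μ := integral_mono hupos hpos (hindSpos_le k)
    have hS'pos : Integrable (fun ω => max (S' ω) 0) μ := by
      refine helper_int _ A (∫ ω, max (S ω) 0 ∂μ)
        ((hS'aesm.aemeasurable.max aemeasurable_const).aestronglyMeasurable)
        (fun ω => le_max_right _ _) hAm hAmono hAcov (fun k => ?_) hbd1
      rw [hmax_ind S' k]; exact (hindS' k).pos_part
    -- apply the induction hypothesis
    have hIH : Integrable S' μ ∧ ∫ ω, S' ω ∂μ = 0 := by
      refine ih Y V' hY hV'int ?_ ?_ ?_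
      · intro t i α hα hbdα
        obtain ⟨C, hC⟩ := hbdα
        by_cases h : (t : ℕ) < m
        · rw [hV'pos t i h,
            ← helper_pull (𝓕 m) hGle α (V t i)
              (hα.mono (hmono _ _ (by omega)) le_rfl) C hC (hV t i)]
          exact hperp t i α hα ⟨C, hC⟩
        · rw [hV'neg t i h]; simp
      · intro t ht i
        exact hV'neg t i (by omega)
      · exact hS'pos
    obtain ⟨hS'int, hS'zero⟩ := hIH
    -- the integrals of the truncations agree
    have hintuk : ∀ k, ∫ ω, (A k).indicator S ω ∂μ = ∫ ω, (A k).indicator S' ω ∂μ := by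
      intro k
      rw [← integral_condExp hGle (f := (A k).indicator S)]
      exact (integral_congr_ae (hstar k)).symm
    -- negative part of S is integrable
    have hneg_ind : ∀ k, (A k).indicator (fun ω => max (-(S ω)) 0)
        = fun ω => max (-((A k).indicator S ω)) 0 := by
      intro k; funext ω
      by_cases h : ω ∈ A k
      · simp [Set.indicator_of_mem h]
      · simp [Set.indicator_of_notMem h]
    have hmaxsub : ∀ (g : Ω → ℝ), Integrable g μ →
        ∫ ω, max (-(g ω)) 0 ∂μ = ∫ ω, max (g ω) 0 ∂μ - ∫ ω, g ω ∂μ := by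
      intro g hg
      rw [eq_sub_iff_add_eq, ← integral_add hg.neg_part hg]
      refine integral_congr_ae (Filter.Eventually.of_forall fun ω => ?_)
      simp only [Pi.add_apply]
      rcases le_total (g ω) 0 with h1 | h1
      · rw [max_eq_left (neg_nonneg.2 h1), max_eq_right h1]; ring
      · rw [max_eq_right (neg_nonpos.2 h1), max_eq_left h1]; ring
    have hbd2 : ∀ k, ∫ ω, (A k).indicator (fun ω => max (-(S ω)) 0) ω ∂μ
        ≤ ∫ ω, max (S ω) 0 ∂μ + ∫ ω, |S' ω| ∂μ := by
      intro k
      rw [hneg_ind k, hmaxsub _ (hindS k), hintuk k]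
      have h1 : ∫ ω, max ((A k).indicator S ω) 0 ∂μ ≤ ∫ ω, max (S ω) 0 ∂μ :=
        integral_mono (hindS k).pos_part hpos (hindSpos_le k)
      have ha : |∫ ω, (A k).indicator S' ω ∂μ| ≤ ∫ ω, |(A k).indicator S' ω| ∂μ := by
        simpa only [Real.norm_eq_abs] using
          norm_integral_le_integral_norm (μ := μ) (fun ω => (A k).indicator S' ω)
      have hb : ∫ ω, |(A k).indicator S' ω| ∂μ ≤ ∫ ω, |S' ω| ∂μ := by
        refine integral_mono (hindS' k).abs hS'int.abs fun ω => ?_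
        by_cases h : ω ∈ A k
        · rw [Set.indicator_of_mem h]
        · rw [Set.indicator_of_notMem h]; simp
      have h2 : -(∫ ω, (A k).indicator S' ω ∂μ) ≤ ∫ ω, |S' ω| ∂μ :=
        le_trans (neg_le_abs _) (le_trans ha hb)
      linarith
    have hSnegint : Integrable (fun ω => max (-(S ω)) 0) μ := by
      refine helper_int _ A (∫ ω, max (S ω) 0 ∂μ + ∫ ω, |S' ω| ∂μ)
        (((hSaesm.aemeasurable.neg).max aemeasurable_const).aestronglyMeasurable)
        (fun ω => le_max_right _ _) hAm hAmono hAcov (fun k => ?_) hbd2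
      rw [hneg_ind k]; exact (hindS k).neg_part
    have hSint : Integrable S μ := by
      refine (hpos.sub hSnegint).congr (Filter.Eventually.of_forall fun ω => ?_)
      simp only [Pi.sub_apply]
      rcases le_total (S ω) 0 with h1 | h1
      · rw [max_eq_right h1, max_eq_left (neg_nonneg.2 h1)]; ring
      · rw [max_eq_left h1, max_eq_right (neg_nonpos.2 h1)]; ring
    refine ⟨hSint, ?_⟩
    -- dominated convergence
    have hDCT : ∀ (g : Ω → ℝ), Integrable g μ →
        Tendsto (fun k => ∫ ω, (A k).indicator g ω ∂μ) atTop (𝓝 (∫ ω, g ω ∂μ)) := by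
      intro g hg
      refine tendsto_integral_of_dominated_convergence (fun ω => |g ω|)
        (fun k => hg.aestronglyMeasurable.indicator (hAm k)) hg.abs
        (fun k => Filter.Eventually.of_forall fun ω => ?_)
        (Filter.Eventually.of_forall fun ω => ?_)
      · rw [Real.norm_eq_abs]
        by_cases h : ω ∈ A k
        · rw [Set.indicator_of_mem h]
        · rw [Set.indicator_of_notMem h]; simp
      · obtain ⟨k0, hk0⟩ := hAcov ω
        refine Tendsto.congr' ?_ tendsto_const_nhds
        filter_upwards [Filter.eventually_ge_atTop k0] with k hk
        exact (Set.indicator_of_mem (hAmono hk hk0) g).symm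
    have hlim1 : Tendsto (fun k => ∫ ω, (A k).indicator S ω ∂μ) atTop
        (𝓝 (∫ ω, S ω ∂μ)) := hDCT S hSint
    have hlim2 : Tendsto (fun k => ∫ ω, (A k).indicator S ω ∂μ) atTop (𝓝 0) := by
      have h := hDCT S' hS'int
      rw [hS'zero] at h
      exact h.congr fun k => (hintuk k).symm
    exact tendsto_nhds_unique hlim1 hlim2


end Statement11Aux

/-- Lemma 4.2: if `x ∈ N`, `v ∈ N^⊥` and the positive part of `x·v`
is integrable, then `x·v` is integrable and `E[x·v] = 0`. -/
theorem statement11 {Ω : Type*} {mΩ : MeasurableSpace Ω} (μ : Measure Ω)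
    [IsProbabilityMeasure μ] (T : ℕ) (nn : ℕ → ℕ) (𝓕 : ℕ → MeasurableSpace Ω)
    (hle : ∀ t, 𝓕 t ≤ mΩ) (hmono : ∀ s t, s ≤ t → 𝓕 s ≤ 𝓕 t)
    (x : Ω → Strat T nn) (hx : AdaptedProc T nn 𝓕 x)
    (v : Ω → Strat T nn) (hv : InNperp μ T nn 𝓕 v)
    (hpos : Integrable (fun ω => max (sdot (x ω) (v ω)) 0) μ) :
    Integrable (fun ω => sdot (x ω) (v ω)) μ ∧
    ∫ ω, sdot (x ω) (v ω) ∂μ = 0 := by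
  classical
  -- rewrite sdot as a double sum of coordinates
  have hsdot : ∀ (a b : Strat T nn), sdot a b = ∑ t, ∑ i, a t i * b t i := by
    intro a b
    unfold sdot
    refine Finset.sum_congr rfl fun t _ => ?_
    rw [PiLp.inner_apply]
    refine Finset.sum_congr rfl fun i _ => ?_
    simp [RCLike.inner_apply, conj_trivial, mul_comm]
  -- coordinates
  have hXdef : True := trivial
  have hXmeas : ∀ t i, Measurable[𝓕 t.1] (fun ω => x ω t i) := by
    intro t i
    exact ((EuclideanSpace.proj i).continuous.measurable).comp (hx t)
  have hVint : ∀ t i, Integrable (fun ω => v ω t i) μ := by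
    intro t i
    have h1 : Integrable (fun ω => v ω t) μ :=
      (ContinuousLinearMap.proj (R := ℝ)
        (φ := fun s : Fin (T+1) => EuclideanSpace ℝ (Fin (nn s.1))) t).integrable_comp hv.1
    exact (EuclideanSpace.proj i (𝕜 := ℝ)).integrable_comp h1
  have hperp : ∀ (t : Fin (T+1)) (i : Fin (nn t.1)) (α : Ω → ℝ), Measurable[𝓕 t.1] α →
      (∃ C, ∀ ω, |α ω| ≤ C) → ∫ ω, α ω * v ω t i ∂μ = 0 := by
    intro t i α hα ⟨C, hC⟩
    set z : Ω → Strat T nn :=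
      fun ω => Function.update (0 : Strat T nn) t (α ω • EuclideanSpace.single i (1:ℝ)) with hzdef
    have hzad : AdaptedProc T nn 𝓕 z := by
      intro s
      by_cases hst : s = t
      · subst hst
        have : (fun ω => z ω s) = fun ω => α ω • EuclideanSpace.single i (1:ℝ) := by
          funext ω; simp [hzdef]
        rw [this]
        exact ((continuous_id.smul continuous_const).measurable).comp hα
      · have : (fun ω => z ω s) = fun _ => (0 : EuclideanSpace ℝ (Fin (nn s.1))) := by
          funext ω; simp [hzdef, Function.update_of_ne hst]
        rw [this]
        exact measurable_const
    have hzbd : ∃ C', ∀ ω, ‖z ω‖ ≤ C' := by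
      refine ⟨max C 0, fun ω => ?_⟩
      rw [pi_norm_le_iff_of_nonneg (le_max_right C 0)]
      intro s
      by_cases hst : s = t
      · subst hst
        simp only [hzdef, Function.update_self]
        rw [norm_smul, EuclideanSpace.norm_single]
        simp only [norm_one, mul_one, Real.norm_eq_abs]
        exact le_trans (hC ω) (le_max_left C 0)
      · simp [hzdef, Function.update_of_ne hst, le_max_right C 0]
    have h0 := hv.2 z hzad hzbd
    have hz2 : ∀ ω, sdot (z ω) (v ω) = α ω * v ω t i := by
      intro ω
      unfold sdot
      rw [Finset.sum_eq_single t]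
      · simp only [hzdef, Function.update_self]
        rw [real_inner_smul_left, EuclideanSpace.inner_single_left]
        simp
      · intro s _ hst
        simp [hzdef, Function.update_of_ne hst]
      · intro h; exact absurd (Finset.mem_univ t) h
    rw [← integral_congr_ae (Filter.Eventually.of_forall fun ω => (hz2 ω))]
    exact h0
  have hvan : ∀ (t : Fin (T+1)), T + 1 ≤ t.1 → ∀ i, (fun ω => v ω t i) = 0 := by
    intro t ht i
    exact absurd ht (by have := t.2; omega)
  have hkey := aux_key T nn 𝓕 hle hmono (T+1) (fun t i ω => x ω t i) (fun t i ω => v ω t i)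
    hXmeas hVint hperp hvan (by
    refine hpos.congr (Filter.Eventually.of_forall fun ω => ?_)
    simp only [hsdot (x ω) (v ω)])
  constructor
  · refine hkey.1.congr (Filter.Eventually.of_forall fun ω => ?_)
    simp only [hsdot (x ω) (v ω)]
  · rw [show (fun ω => sdot (x ω) (v ω)) = fun ω => ∑ t, ∑ i, x ω t i * v ω t i from
      funext fun ω => hsdot (x ω) (v ω)]
    exact hkey.2

end PaperDP
end
end

section
/- Let s = (s_t)_{t=0}^T be an ℝᵈ-valued martingale with respect to the filtration (F_t)_{t=0}^T (each s_t is F_t-measurable and integrable, and E[s_{t+1} − s_t | F_t] = 0 a.s.), and let (x_t)_{t=0}^{T−1} be an adapted process with x_t : Ω → ℝᵈ F_t-measurable. If the positive part of Σ_{t=0}^{T−1} x_t·(s_{t+1} − s_t) is integrable, then Σ_{t=0}^{T−1} x_t·(s_{t+1} − s_t) is integrable and E[Σ_{t=0}^{T−1} x_t·(s_{t+1} − s_t)] = 0. -/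
open MeasureTheory Filter
open scoped RealInnerProductSpace

noncomputable section

namespace Statement12Aux

variable {Ω : Type*} {d : ℕ}

lemma coord_abs_le_norm {d : ℕ} (v : EuclideanSpace ℝ (Fin d)) (i : Fin d) :
    |v i| ≤ ‖v‖ := by
  have h1 : ⟪EuclideanSpace.single i (1:ℝ), v⟫ = v i := by
    simp [EuclideanSpace.inner_single_left]
  calc |v i| = |⟪EuclideanSpace.single i (1:ℝ), v⟫| := by rw [h1]
    _ ≤ ‖EuclideanSpace.single i (1:ℝ)‖ * ‖v‖ := abs_real_inner_le_norm _ _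
    _ = ‖v‖ := by simp [EuclideanSpace.norm_single]

lemma neg_part_eq (a : ℝ) : max (-a) 0 = max a 0 - a := by
  rcases le_total a 0 with h | h
  · rw [max_eq_left (neg_nonneg.2 h), max_eq_right h]; ring
  · rw [max_eq_right (neg_nonpos.2 h), max_eq_left h]; ring

lemma integrable_of_indicator_bound {mΩ : MeasurableSpace Ω} {μ : Measure Ω}
    {f : Ω → ℝ} (hf : Measurable f) (h0 : ∀ ω, 0 ≤ f ω)
    (A : ℕ → Set Ω) (hAmeas : ∀ n, MeasurableSet (A n)) (hAmono : Monotone A)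
    (hAcov : ∀ ω, ∃ N, ω ∈ A N) {C : ℝ}
    (hint : ∀ n, Integrable ((A n).indicator f) μ)
    (hbd : ∀ n, ∫ ω, (A n).indicator f ω ∂μ ≤ C) :
    Integrable f μ := by
  refine ⟨hf.aestronglyMeasurable, ?_⟩
  rw [hasFiniteIntegral_iff_norm]
  have hkey : ∀ ω, (⨆ n, ENNReal.ofReal ((A n).indicator f ω)) = ENNReal.ofReal ‖f ω‖ := by
    intro ω
    obtain ⟨N, hN⟩ := hAcov ω
    rw [Real.norm_of_nonneg (h0 ω)]
    refine le_antisymm (iSup_le fun n => ?_) (le_iSup_of_le N ?_)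
    · exact ENNReal.ofReal_le_ofReal (Set.indicator_le_self' (fun _ _ => h0 _) ω)
    · rw [Set.indicator_of_mem hN]
  calc ∫⁻ ω, ENNReal.ofReal ‖f ω‖ ∂μ
      = ∫⁻ ω, ⨆ n, ENNReal.ofReal ((A n).indicator f ω) ∂μ := by
        simp_rw [hkey]
    _ = ⨆ n, ∫⁻ ω, ENNReal.ofReal ((A n).indicator f ω) ∂μ := by
        refine lintegral_iSup (fun n => (hf.indicator (hAmeas n)).ennreal_ofReal) ?_
        intro n m hnm ω
        exact ENNReal.ofReal_le_ofReal
          (Set.indicator_le_indicator_of_subset (hAmono hnm) (fun _ => h0 _) ω)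
    _ ≤ ENNReal.ofReal C := by
        refine iSup_le fun n => ?_
        rw [← ofReal_integral_eq_lintegral_ofReal (hint n)
          (Filter.Eventually.of_forall fun ω => Set.indicator_nonneg (fun _ _ => h0 _) ω)]
        exact ENNReal.ofReal_le_ofReal (hbd n)
    _ < ⊤ := ENNReal.ofReal_lt_top

lemma integral_inner_zero {m : MeasurableSpace Ω} {mΩ : MeasurableSpace Ω}
    {μ : Measure Ω} [IsProbabilityMeasure μ]
    (hm : m ≤ mΩ) {Δ : Ω → EuclideanSpace ℝ (Fin d)}
    (hΔmeas : Measurable[mΩ] Δ) (hΔint : Integrable Δ μ)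
    (hΔcond : μ[Δ|m] =ᵐ[μ] 0) {b : Ω → EuclideanSpace ℝ (Fin d)}
    (hb : Measurable[m] b) {C : ℝ} (hbC : ∀ ω, ‖b ω‖ ≤ C) :
    Integrable (fun ω => ⟪b ω, Δ ω⟫) μ ∧ ∫ ω, ⟪b ω, Δ ω⟫ ∂μ = 0 := by
  haveI : SigmaFinite (μ.trim hm) := by
    have : IsFiniteMeasure (μ.trim hm) := isFiniteMeasure_trim hm
    infer_instance
  have hbm : Measurable[mΩ] b := hb.mono hm le_rfl
  have hbim : ∀ i : Fin d, Measurable[m] (fun ω => b ω i) := fun i =>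
    ((EuclideanSpace.proj i : EuclideanSpace ℝ (Fin d) →L[ℝ] ℝ).continuous.measurable).comp hb
  have hbimΩ : ∀ i : Fin d, Measurable[mΩ] (fun ω => b ω i) := fun i =>
    (hbim i).mono hm le_rfl
  have hΔim : ∀ i : Fin d, Measurable[mΩ] (fun ω => Δ ω i) := fun i =>
    ((EuclideanSpace.proj i : EuclideanSpace ℝ (Fin d) →L[ℝ] ℝ).continuous.measurable).comp hΔmeas
  have hΔi_int : ∀ i : Fin d, Integrable (fun ω => Δ ω i) μ := fun i => by
    refine Integrable.mono' hΔint.norm ((hΔim i).aestronglyMeasurable)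
      (Filter.Eventually.of_forall fun ω => ?_)
    rw [Real.norm_eq_abs]
    exact coord_abs_le_norm (Δ ω) i
  have hterm_int : ∀ i : Fin d, Integrable (fun ω => b ω i * Δ ω i) μ := fun i => by
    refine Integrable.mono' (hΔint.norm.const_mul C)
      (((hbimΩ i).mul (hΔim i)).aestronglyMeasurable)
      (Filter.Eventually.of_forall fun ω => ?_)
    rw [Real.norm_eq_abs, abs_mul]
    have h1 : |b ω i| ≤ C := le_trans (coord_abs_le_norm (b ω) i) (hbC ω)
    have h2 : |Δ ω i| ≤ ‖Δ ω‖ := coord_abs_le_norm (Δ ω) i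
    exact mul_le_mul h1 h2 (abs_nonneg _) (le_trans (abs_nonneg _) h1)
  have hint : Integrable (fun ω => ⟪b ω, Δ ω⟫) μ := by
    refine Integrable.mono' (hΔint.norm.const_mul C)
      ((hbm.inner hΔmeas).aestronglyMeasurable) (Filter.Eventually.of_forall fun ω => ?_)
    rw [Real.norm_eq_abs]
    exact le_trans (abs_real_inner_le_norm _ _)
      (mul_le_mul_of_nonneg_right (hbC ω) (norm_nonneg _))
  refine ⟨hint, ?_⟩
  have hinner_eq : ∀ ω, ⟪b ω, Δ ω⟫ = ∑ i : Fin d, b ω i * Δ ω i := fun ω => by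
    simp [PiLp.inner_apply, RCLike.inner_apply, mul_comm]
  calc ∫ ω, ⟪b ω, Δ ω⟫ ∂μ = ∫ ω, ∑ i : Fin d, b ω i * Δ ω i ∂μ := by
        simp_rw [hinner_eq]
    _ = ∑ i : Fin d, ∫ ω, b ω i * Δ ω i ∂μ :=
        integral_finset_sum _ fun i _ => hterm_int i
    _ = 0 := by
        refine Finset.sum_eq_zero fun i _ => ?_
        have hcondi : (fun _ => (0:ℝ)) =ᵐ[μ] μ[fun ω => Δ ω i|m] := by
          refine ae_eq_condExp_of_forall_setIntegral_eq hm (hΔi_int i)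
            (fun t _ _ => (integrable_zero _ _ _).integrableOn)
            (fun t ht hμt => ?_)
            (StronglyMeasurable.aestronglyMeasurable
              (stronglyMeasurable_const : StronglyMeasurable[m] fun _ : Ω => (0:ℝ)))
          have h1 : ∫ ω in t, Δ ω ∂μ = 0 := by
            rw [← setIntegral_condExp hm hΔint ht]
            calc ∫ ω in t, (μ[Δ|m]) ω ∂μ = ∫ ω in t, (0 : EuclideanSpace ℝ (Fin d)) ∂μ :=
                  setIntegral_congr_ae (hm t ht) (hΔcond.mono fun ω hω _ => hω)
              _ = 0 := integral_zero _ _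
          have h2 : ∫ ω in t, (EuclideanSpace.proj i : EuclideanSpace ℝ (Fin d) →L[ℝ] ℝ) (Δ ω) ∂μ
              = (EuclideanSpace.proj i : EuclideanSpace ℝ (Fin d) →L[ℝ] ℝ)
              (∫ ω in t, Δ ω ∂μ) :=
            ContinuousLinearMap.integral_comp_comm _ hΔint.integrableOn
          have h3 : ∫ ω in t, Δ ω i ∂μ
              = ∫ ω in t, (EuclideanSpace.proj i : EuclideanSpace ℝ (Fin d) →L[ℝ] ℝ) (Δ ω) ∂μ :=
            rfl
          rw [h3, h2, h1]
          simp
        have hmul := condExp_mul_of_stronglyMeasurable_left (μ := μ)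
          ((hbim i).stronglyMeasurable) (show Integrable ((fun ω => b ω i) * fun ω => Δ ω i) μ
            from hterm_int i) (hΔi_int i)
        have hzero : (fun ω => b ω i) * μ[fun ω => Δ ω i|m] =ᵐ[μ] fun _ => (0:ℝ) := by
          filter_upwards [hcondi] with ω hω
          simp [Pi.mul_apply, ← hω]
        calc ∫ ω, b ω i * Δ ω i ∂μ
            = ∫ ω, (μ[(fun ω => b ω i) * (fun ω => Δ ω i)|m]) ω ∂μ :=
              (integral_condExp (f := (fun ω => b ω i) * fun ω => Δ ω i) hm).symm
          _ = ∫ ω, ((fun ω => b ω i) * μ[fun ω => Δ ω i|m]) ω ∂μ :=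
              integral_congr_ae hmul
          _ = ∫ ω, (0:ℝ) ∂μ := integral_congr_ae hzero
          _ = 0 := integral_zero _ _

/-- The partial stochastic integral. -/
def S (d : ℕ) (x s : ℕ → Ω → EuclideanSpace ℝ (Fin d)) (k : ℕ) (ω : Ω) : ℝ :=
  ∑ t ∈ Finset.range k, ⟪x t ω, s (t + 1) ω - s t ω⟫

/-- Truncation sets. -/
def Aset (d : ℕ) (x s : ℕ → Ω → EuclideanSpace ℝ (Fin d)) (k n : ℕ) : Set Ω :=
  {ω | |S d x s k ω| ≤ (n:ℝ) ∧ ‖x k ω‖ ≤ (n:ℝ)}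

lemma Aset_measurableSet {m : MeasurableSpace Ω} {x s : ℕ → Ω → EuclideanSpace ℝ (Fin d)}
    {k n : ℕ} (hS : Measurable (S d x s k)) (hxk : Measurable (x k)) :
    MeasurableSet (Aset d x s k n) := by
  have : Aset d x s k n = {ω | |S d x s k ω| ≤ (n:ℝ)} ∩ {ω | ‖x k ω‖ ≤ (n:ℝ)} := by
    rw [Aset, Set.setOf_and]
  rw [this]
  exact (measurableSet_le hS.abs measurable_const).inter
    (measurableSet_le hxk.norm measurable_const)

lemma posSet_measurableSet {m : MeasurableSpace Ω} {x s : ℕ → Ω → EuclideanSpace ℝ (Fin d)}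
    {k : ℕ} (hS : Measurable (S d x s k)) :
    MeasurableSet {ω | 0 < S d x s k ω} :=
  measurableSet_lt measurable_const hS

lemma S_measurable {m : MeasurableSpace Ω} {x s : ℕ → Ω → EuclideanSpace ℝ (Fin d)} {k : ℕ}
    (hxm : ∀ t < k, Measurable (x t)) (hsm : ∀ t ≤ k, Measurable (s t)) :
    Measurable (S d x s k) := by
  refine Finset.measurable_sum _ fun t htmem => ?_
  have ht : t < k := Finset.mem_range.mp htmem
  exact Measurable.inner (hxm t ht) ((hsm (t + 1) ht).sub (hsm t ht.le))

lemma main {mΩ : MeasurableSpace Ω} {μ : Measure Ω} [IsProbabilityMeasure μ]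
    (T : ℕ) (𝓕 : ℕ → MeasurableSpace Ω)
    (hle : ∀ t, 𝓕 t ≤ mΩ) (hmono : ∀ a b, a ≤ b → 𝓕 a ≤ 𝓕 b)
    (s : ℕ → Ω → EuclideanSpace ℝ (Fin d))
    (hs_adapted : ∀ t ≤ T, Measurable[𝓕 t] (s t))
    (hs_int : ∀ t ≤ T, Integrable (s t) μ)
    (hmart : ∀ t < T, μ[fun ω => s (t + 1) ω - s t ω|𝓕 t] =ᵐ[μ] 0)
    (x : ℕ → Ω → EuclideanSpace ℝ (Fin d))
    (hx : ∀ t < T, Measurable[𝓕 t] (x t))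
    (hpos : Integrable (fun ω => max (S d x s T ω) 0) μ) :
    Integrable (S d x s T) μ ∧ ∫ ω, S d x s T ω ∂μ = 0 := by
  have hS_succ : ∀ k ω, S d x s (k + 1) ω = S d x s k ω + ⟪x k ω, s (k + 1) ω - s k ω⟫ :=
    fun k ω => Finset.sum_range_succ _ _
  have hΔmeas : ∀ t < T, Measurable[mΩ] (fun ω => s (t + 1) ω - s t ω) := fun t ht =>
    (((hs_adapted (t + 1) ht).mono (hle (t + 1)) le_rfl)).sub
      ((hs_adapted t ht.le).mono (hle t) le_rfl)
  have hΔint : ∀ t < T, Integrable (fun ω => s (t + 1) ω - s t ω) μ := fun t ht =>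
    (hs_int (t + 1) ht).sub (hs_int t ht.le)
  have hSF : ∀ k, k ≤ T → Measurable[𝓕 k] (S d x s k) := by
    intro k hk
    refine S_measurable (m := 𝓕 k) (fun t ht => ?_) (fun t ht => ?_)
    · exact (hx t (lt_of_lt_of_le ht hk)).mono (hmono t k ht.le) le_rfl
    · exact (hs_adapted t (le_trans ht hk)).mono (hmono t k ht) le_rfl
  have hSmeas : ∀ k, k ≤ T → Measurable[mΩ] (S d x s k) := fun k hk =>
    (hSF k hk).mono (hle k) le_rfl
  have hAF : ∀ k, k < T → ∀ n, MeasurableSet[𝓕 k] (Aset d x s k n) := fun k hk n =>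
    Aset_measurableSet (m := 𝓕 k) (hSF k hk.le) (hx k hk)
  have hAmono : ∀ k, Monotone (Aset d x s k) := by
    intro k n m hnm ω hω
    exact ⟨hω.1.trans (Nat.cast_le.2 hnm), hω.2.trans (Nat.cast_le.2 hnm)⟩
  have hAcov : ∀ k ω, ∃ N, ∀ n, N ≤ n → ω ∈ Aset d x s k n := by
    intro k ω
    obtain ⟨N, hN⟩ := exists_nat_ge (max |S d x s k ω| ‖x k ω‖)
    exact ⟨N, fun n hn => ⟨le_trans (le_trans (le_max_left _ _) hN) (Nat.cast_le.2 hn),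
      le_trans (le_trans (le_max_right _ _) hN) (Nat.cast_le.2 hn)⟩⟩
  -- the key one-step fact
  have key : ∀ k, k < T → ∀ n : ℕ, ∀ E : Set Ω, MeasurableSet[𝓕 k] E →
      E ⊆ Aset d x s k n →
      Integrable (E.indicator (fun ω => ⟪x k ω, s (k + 1) ω - s k ω⟫)) μ ∧
      ∫ ω, E.indicator (fun ω => ⟪x k ω, s (k + 1) ω - s k ω⟫) ω ∂μ = 0 := by
    intro k hk n E hE hsub
    have hbmeas : Measurable[𝓕 k] (E.indicator (x k)) := (hx k hk).indicator hE
    have hbC : ∀ ω, ‖(E.indicator (x k)) ω‖ ≤ (n:ℝ) := by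
      intro ω
      by_cases h : ω ∈ E
      · rw [Set.indicator_of_mem h]; exact (hsub h).2
      · rw [Set.indicator_of_notMem h, norm_zero]; exact Nat.cast_nonneg n
    have hindeq : (fun ω => ⟪(E.indicator (x k)) ω, s (k + 1) ω - s k ω⟫)
        = E.indicator (fun ω => ⟪x k ω, s (k + 1) ω - s k ω⟫) := by
      funext ω
      by_cases h : ω ∈ E
      · rw [Set.indicator_of_mem h, Set.indicator_of_mem h]
      · rw [Set.indicator_of_notMem h, Set.indicator_of_notMem h, inner_zero_left]
    have := integral_inner_zero (hle k) (hΔmeas k hk) (hΔint k hk) (hmart k hk) hbmeas hbC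
    rwa [hindeq] at this
  -- indicator of S k on subsets of Aset is integrable (bounded)
  have hSind : ∀ k, k ≤ T → ∀ n : ℕ, ∀ E : Set Ω, MeasurableSet[mΩ] E →
      E ⊆ Aset d x s k n → Integrable (E.indicator (S d x s k)) μ := by
    intro k hk n E hE hsub
    refine Integrable.mono' (integrable_const (n:ℝ))
      (((hSmeas k hk).indicator hE).aestronglyMeasurable)
      (Filter.Eventually.of_forall fun ω => ?_)
    rw [Real.norm_eq_abs]
    by_cases h : ω ∈ E
    · rw [Set.indicator_of_mem h]; exact (hsub h).1
    · rw [Set.indicator_of_notMem h, abs_zero]; exact Nat.cast_nonneg n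
  -- backward induction step
  have back : ∀ k, k < T → Integrable (fun ω => max (S d x s (k + 1) ω) 0) μ →
      Integrable (fun ω => max (S d x s k ω) 0) μ := by
    intro k hk hpos1
    have hBF : MeasurableSet[𝓕 k] {ω | 0 < S d x s k ω} :=
      posSet_measurableSet (m := 𝓕 k) (hSF k hk.le)
    have perfact : ∀ n : ℕ,
        Integrable ((Aset d x s k n).indicator (fun ω => max (S d x s k ω) 0)) μ ∧
        ∫ ω, (Aset d x s k n).indicator (fun ω => max (S d x s k ω) 0) ω ∂μ
          ≤ ∫ ω, max (S d x s (k + 1) ω) 0 ∂μ := by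
      intro n
      have hEF : MeasurableSet[𝓕 k] (Aset d x s k n ∩ {ω | 0 < S d x s k ω}) :=
        (hAF k hk n).inter hBF
      have hEamb : MeasurableSet[mΩ] (Aset d x s k n ∩ {ω | 0 < S d x s k ω}) := hle k _ hEF
      have hsub : (Aset d x s k n ∩ {ω | 0 < S d x s k ω}) ⊆ Aset d x s k n :=
        Set.inter_subset_left
      obtain ⟨hgint, hgzero⟩ := key k hk n _ hEF hsub
      have hSkint := hSind k hk.le n _ hEamb hsub
      have hsum : (Aset d x s k n ∩ {ω | 0 < S d x s k ω}).indicator (S d x s (k + 1))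
          = (Aset d x s k n ∩ {ω | 0 < S d x s k ω}).indicator (S d x s k)
            + (Aset d x s k n ∩ {ω | 0 < S d x s k ω}).indicator
              (fun ω => ⟪x k ω, s (k + 1) ω - s k ω⟫) := by
        funext ω
        by_cases h : ω ∈ Aset d x s k n ∩ {ω | 0 < S d x s k ω}
        · simp only [Pi.add_apply, Set.indicator_of_mem h, hS_succ]
        · simp only [Pi.add_apply, Set.indicator_of_notMem h, add_zero]
      have hS1int : Integrable
          ((Aset d x s k n ∩ {ω | 0 < S d x s k ω}).indicator (S d x s (k + 1))) μ := by
        rw [hsum]; exact hSkint.add hgint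
      have hval : ∫ ω, (Aset d x s k n ∩ {ω | 0 < S d x s k ω}).indicator (S d x s (k + 1)) ω ∂μ
          = ∫ ω, (Aset d x s k n ∩ {ω | 0 < S d x s k ω}).indicator (S d x s k) ω ∂μ := by
        rw [hsum]
        simp only [Pi.add_apply]
        rw [integral_add hSkint hgint, hgzero, add_zero]
      have hid : (Aset d x s k n).indicator (fun ω => max (S d x s k ω) 0)
          = (Aset d x s k n ∩ {ω | 0 < S d x s k ω}).indicator (S d x s k) := by
        funext ω
        by_cases hA : ω ∈ Aset d x s k n
        · by_cases hB : 0 < S d x s k ω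
          · rw [Set.indicator_of_mem hA, Set.indicator_of_mem (Set.mem_inter hA hB),
              max_eq_left hB.le]
          · rw [Set.indicator_of_mem hA,
              Set.indicator_of_notMem (fun h => hB h.2),
              max_eq_right (not_lt.mp hB)]
        · rw [Set.indicator_of_notMem hA,
            Set.indicator_of_notMem (fun h => hA h.1)]
      constructor
      · rw [hid]; exact hSkint
      · rw [hid, ← hval]
        refine integral_mono hS1int hpos1 fun ω => ?_
        by_cases h : ω ∈ Aset d x s k n ∩ {ω | 0 < S d x s k ω}
        · rw [Set.indicator_of_mem h]; exact le_max_left _ _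
        · rw [Set.indicator_of_notMem h]; exact le_max_right _ _
    exact integrable_of_indicator_bound ((hSmeas k hk.le).max measurable_const)
      (fun ω => le_max_right _ _) (Aset d x s k)
      (fun n => hle k _ (hAF k hk n)) (hAmono k)
      (fun ω => (hAcov k ω).imp fun N hN => hN N le_rfl)
      (fun n => (perfact n).1) (fun n => (perfact n).2)
  -- positive parts are integrable for all k ≤ T
  have posAll : ∀ k, k ≤ T → Integrable (fun ω => max (S d x s k ω) 0) μ := by
    have aux : ∀ j, Integrable (fun ω => max (S d x s (T - j) ω) 0) μ := by
      intro j
      induction j with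
      | zero => simpa using hpos
      | succ j ih =>
        rcases Nat.lt_or_ge j T with hj | hj
        · have h1 : T - (j + 1) < T := by omega
          have h2 : T - (j + 1) + 1 = T - j := by omega
          refine back _ h1 ?_
          rw [h2]; exact ih
        · have h : T - (j + 1) = T - j := by omega
          rw [h]; exact ih
    intro k hk
    have := aux (T - k)
    rwa [Nat.sub_sub_self hk] at this
  -- forward induction
  have fwd : ∀ k, k ≤ T → Integrable (S d x s k) μ ∧ ∫ ω, S d x s k ω ∂μ = 0 := by
    intro k
    induction k with
    | zero =>
      intro _
      have h0 : S d x s 0 = fun _ => (0:ℝ) := funext fun ω => by simp [S]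
      rw [h0]
      exact ⟨integrable_const 0, by simp⟩
    | succ k ih =>
      intro hk1
      have hk : k < T := hk1
      obtain ⟨hSkint, hSkval⟩ := ih hk.le
      have hpos1 := posAll (k + 1) hk1
      -- per-n facts
      have hEamb : ∀ n, MeasurableSet[mΩ] (Aset d x s k n) := fun n => hle k _ (hAF k hk n)
      have hgfact : ∀ n, Integrable ((Aset d x s k n).indicator
            (fun ω => ⟪x k ω, s (k + 1) ω - s k ω⟫)) μ ∧
          ∫ ω, (Aset d x s k n).indicator (fun ω => ⟪x k ω, s (k + 1) ω - s k ω⟫) ω ∂μ = 0 :=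
        fun n => key k hk n _ (hAF k hk n) subset_rfl
      have hSkind : ∀ n, Integrable ((Aset d x s k n).indicator (S d x s k)) μ :=
        fun n => hSkint.indicator (hEamb n)
      have hsum : ∀ n, (Aset d x s k n).indicator (S d x s (k + 1))
          = (Aset d x s k n).indicator (S d x s k)
            + (Aset d x s k n).indicator (fun ω => ⟪x k ω, s (k + 1) ω - s k ω⟫) := by
        intro n
        funext ω
        by_cases h : ω ∈ Aset d x s k n
        · simp only [Pi.add_apply, Set.indicator_of_mem h, hS_succ]
        · simp only [Pi.add_apply, Set.indicator_of_notMem h, add_zero]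
      have hψint : ∀ n, Integrable ((Aset d x s k n).indicator (S d x s (k + 1))) μ := by
        intro n
        rw [hsum n]; exact (hSkind n).add (hgfact n).1
      have hψval : ∀ n, ∫ ω, (Aset d x s k n).indicator (S d x s (k + 1)) ω ∂μ
          = ∫ ω, (Aset d x s k n).indicator (S d x s k) ω ∂μ := by
        intro n
        rw [hsum n]
        simp only [Pi.add_apply]
        rw [integral_add (hSkind n) (hgfact n).1, (hgfact n).2, add_zero]
      -- the negative part
      have hNmeas : Measurable[mΩ] (fun ω => max (-(S d x s (k + 1) ω)) 0) :=
        ((hSmeas (k + 1) hk1).neg.max measurable_const)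
      have hNid : ∀ n, (Aset d x s k n).indicator (fun ω => max (-(S d x s (k + 1) ω)) 0)
          = (Aset d x s k n).indicator (fun ω => max (S d x s (k + 1) ω) 0)
            - (Aset d x s k n).indicator (S d x s (k + 1)) := by
        intro n
        funext ω
        by_cases h : ω ∈ Aset d x s k n
        · simp only [Pi.sub_apply, Set.indicator_of_mem h, neg_part_eq]
        · simp only [Pi.sub_apply, Set.indicator_of_notMem h, sub_zero]
      have hNind_int : ∀ n,
          Integrable ((Aset d x s k n).indicator (fun ω => max (-(S d x s (k + 1) ω)) 0)) μ := by
        intro n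
        rw [hNid n]
        exact (hpos1.indicator (hEamb n)).sub (hψint n)
      have hNbd : ∀ n, ∫ ω, (Aset d x s k n).indicator
            (fun ω => max (-(S d x s (k + 1) ω)) 0) ω ∂μ
          ≤ ∫ ω, max (S d x s (k + 1) ω) 0 ∂μ + ∫ ω, |S d x s k ω| ∂μ := by
        intro n
        rw [hNid n]
        simp only [Pi.sub_apply]
        rw [integral_sub (hpos1.indicator (hEamb n)) (hψint n), hψval n]
        have b1 : ∫ ω, (Aset d x s k n).indicator (fun ω => max (S d x s (k + 1) ω) 0) ω ∂μ
            ≤ ∫ ω, max (S d x s (k + 1) ω) 0 ∂μ := by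
          refine integral_mono (hpos1.indicator (hEamb n)) hpos1 fun ω => ?_
          exact Set.indicator_le_self' (fun _ _ => le_max_right _ _) ω
        have b2 : |∫ ω, (Aset d x s k n).indicator (S d x s k) ω ∂μ|
            ≤ ∫ ω, |S d x s k ω| ∂μ := by
          have h1 : |∫ ω, (Aset d x s k n).indicator (S d x s k) ω ∂μ|
              ≤ ∫ ω, |(Aset d x s k n).indicator (S d x s k) ω| ∂μ := by
            simpa [Real.norm_eq_abs] using
              norm_integral_le_integral_norm ((Aset d x s k n).indicator (S d x s k)) (μ := μ)
          refine le_trans h1 ?_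
          refine integral_mono (hSkind n).abs hSkint.abs fun ω => ?_
          by_cases h : ω ∈ Aset d x s k n
          · rw [Set.indicator_of_mem h]
          · rw [Set.indicator_of_notMem h, abs_zero]; exact abs_nonneg _
        have := neg_abs_le (∫ ω, (Aset d x s k n).indicator (S d x s k) ω ∂μ)
        linarith [abs_le.mp b2]
      have hNint : Integrable (fun ω => max (-(S d x s (k + 1) ω)) 0) μ :=
        integrable_of_indicator_bound hNmeas (fun ω => le_max_right _ _)
          (Aset d x s k) hEamb (hAmono k)
          (fun ω => (hAcov k ω).imp fun N hN => hN N le_rfl)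
          hNind_int hNbd
      have hS1int : Integrable (S d x s (k + 1)) μ := by
        have hrepr : S d x s (k + 1) = (fun ω => max (S d x s (k + 1) ω) 0)
            - fun ω => max (-(S d x s (k + 1) ω)) 0 := by
          funext ω
          simp only [Pi.sub_apply, neg_part_eq]
          ring
        rw [hrepr]
        exact hpos1.sub hNint
      refine ⟨hS1int, ?_⟩
      -- compute the integral by dominated convergence
      have hT1 : Tendsto (fun n => ∫ ω, (Aset d x s k n).indicator (S d x s (k + 1)) ω ∂μ)
          atTop (nhds (∫ ω, S d x s (k + 1) ω ∂μ)) := by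
        refine tendsto_integral_of_dominated_convergence (fun ω => |S d x s (k + 1) ω|)
          (fun n => ((hSmeas (k + 1) hk1).indicator (hEamb n)).aestronglyMeasurable)
          hS1int.abs (fun n => Filter.Eventually.of_forall fun ω => ?_)
          (Filter.Eventually.of_forall fun ω => ?_)
        · rw [Real.norm_eq_abs]
          by_cases h : ω ∈ Aset d x s k n
          · rw [Set.indicator_of_mem h]
          · rw [Set.indicator_of_notMem h, abs_zero]; exact abs_nonneg _
        · obtain ⟨N, hN⟩ := hAcov k ω
          exact tendsto_atTop_of_eventually_const (i₀ := N)
            (fun n hn => Set.indicator_of_mem (hN n hn) _)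
      have hT2 : Tendsto (fun n => ∫ ω, (Aset d x s k n).indicator (S d x s (k + 1)) ω ∂μ)
          atTop (nhds 0) := by
        have h2 : Tendsto (fun n => ∫ ω, (Aset d x s k n).indicator (S d x s k) ω ∂μ)
            atTop (nhds (∫ ω, S d x s k ω ∂μ)) := by
          refine tendsto_integral_of_dominated_convergence (fun ω => |S d x s k ω|)
            (fun n => ((hSmeas k hk.le).indicator (hEamb n)).aestronglyMeasurable)
            hSkint.abs (fun n => Filter.Eventually.of_forall fun ω => ?_)
            (Filter.Eventually.of_forall fun ω => ?_)
          · rw [Real.norm_eq_abs]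
            by_cases h : ω ∈ Aset d x s k n
            · rw [Set.indicator_of_mem h]
            · rw [Set.indicator_of_notMem h, abs_zero]; exact abs_nonneg _
          · obtain ⟨N, hN⟩ := hAcov k ω
            exact tendsto_atTop_of_eventually_const (i₀ := N)
              (fun n hn => Set.indicator_of_mem (hN n hn) _)
        rw [hSkval] at h2
        simpa only [hψval] using h2
      exact tendsto_nhds_unique hT1 hT2
  exact fwd T le_rfl

end Statement12Aux


/-- Example 4.3: if `s` is a `d`-dimensional martingale and `x` an
adapted process such that the positive part of the stochastic integral
`Σ_{t<T} x_t · Δs_{t+1}` is integrable, then the stochastic integral is integrable with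
zero expectation. -/
theorem statement12 {Ω : Type*} {mΩ : MeasurableSpace Ω} (μ : Measure Ω)
    [IsProbabilityMeasure μ] (T d : ℕ) (𝓕 : ℕ → MeasurableSpace Ω)
    (hle : ∀ t, 𝓕 t ≤ mΩ) (hmono : ∀ s t, s ≤ t → 𝓕 s ≤ 𝓕 t)
    (s : ℕ → Ω → EuclideanSpace ℝ (Fin d))
    (hs_adapted : ∀ t ≤ T, Measurable[𝓕 t] (s t))
    (hs_int : ∀ t ≤ T, Integrable (s t) μ)
    (hmart : ∀ t < T, μ[fun ω => s (t + 1) ω - s t ω|𝓕 t] =ᵐ[μ] 0)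
    (x : ℕ → Ω → EuclideanSpace ℝ (Fin d))
    (hx : ∀ t < T, Measurable[𝓕 t] (x t))
    (hpos : Integrable
      (fun ω => max (∑ t ∈ Finset.range T, ⟪x t ω, s (t + 1) ω - s t ω⟫) 0) μ) :
    Integrable (fun ω => ∑ t ∈ Finset.range T, ⟪x t ω, s (t + 1) ω - s t ω⟫) μ ∧
    ∫ ω, ∑ t ∈ Finset.range T, ⟪x t ω, s (t + 1) ω - s t ω⟫ ∂μ = 0 :=
  Statement12Aux.main T 𝓕 hle hmono s hs_adapted hs_int hmart x hx hpos
end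
end
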